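/- arXiv:2103.16479 — 11 statements merged into one kernel-verified Lean document; each statement's English description precedes it below -/
import Mathlib

section
/- If \mathcal{F} \subset 2^{[n]} is a family of sets such that |A \cap B| is even for all A, B \in \mathcal{F}, then |\mathcal{F}| \leq 2^{\lfloor n/2 \rfloor}. -/
open Module Finset

section Aux

variable {n : ℕ}

/-- The indicator vector of a finite set of `Fin n` over `ZMod 2`. -/
def indVec (A : Finset (Fin n)) : Fin n → ZMod 2 := fun i => if i ∈ A then 1 else 0

lemma indVec_injective : Function.Injective (indVec (n := n)) := by
  intro A B hAB
  ext i
  have := congr_fun hAB i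
  by_cases hA : i ∈ A <;> by_cases hB : i ∈ B <;>
    simp [indVec, hA, hB] at this ⊢

/-- The standard dot product bilinear form over `ZMod 2`. -/
def dotForm (n : ℕ) : LinearMap.BilinForm (ZMod 2) (Fin n → ZMod 2) :=
  LinearMap.mk₂ (ZMod 2) (fun v w => ∑ i, v i * w i)
    (by intro v v' w; simp [add_mul, Finset.sum_add_distrib])
    (by intro c v w; simp [Finset.mul_sum, mul_assoc])
    (by intro v w w'; simp [mul_add, Finset.sum_add_distrib])
    (by intro c v w; simp only [LinearMap.smul_apply, smul_eq_mul, Finset.mul_sum]; exact Finset.sum_congr rfl fun i _ => by simp [Pi.smul_apply]; ring)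

lemma dotForm_apply (v w : Fin n → ZMod 2) : dotForm n v w = ∑ i, v i * w i := rfl

lemma dotForm_symm (v w : Fin n → ZMod 2) : dotForm n v w = dotForm n w v := by
  simp [dotForm_apply, mul_comm]

lemma dotForm_refl : (dotForm n).IsRefl := fun v w h => by rwa [dotForm_symm]

lemma dotForm_nondegenerate : (dotForm n).Nondegenerate := by
  constructor
  · intro v hv
    funext i
    have := hv (Pi.single i 1)
    simpa [dotForm_apply, Pi.single_apply, mul_ite] using this
  · intro v hv
    funext i
    have := hv (Pi.single i 1)
    simpa [dotForm_apply, Pi.single_apply, ite_mul] using this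

lemma dotForm_indVec (A B : Finset (Fin n)) :
    dotForm n (indVec A) (indVec B) = ((A ∩ B).card : ZMod 2) := by
  rw [dotForm_apply]
  have : ∀ i, indVec A i * indVec B i = if i ∈ A ∩ B then (1 : ZMod 2) else 0 := by
    intro i
    by_cases hA : i ∈ A <;> by_cases hB : i ∈ B <;> simp [indVec, hA, hB]
  simp only [this, Finset.sum_ite_mem, Finset.univ_inter, Finset.sum_const, nsmul_eq_mul, mul_one]

end Aux

/-- Eventown theorem: if all pairwise intersections (including `A = B`) of members of a
family `F` of subsets of `[n]` have even size, then `|F| ≤ 2 ^ ⌊n/2⌋`. -/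
theorem eventown (n : ℕ) (F : Finset (Finset (Fin n)))
    (h : ∀ A ∈ F, ∀ B ∈ F, 2 ∣ (A ∩ B).card) :
    F.card ≤ 2 ^ (n / 2) := by
  classical
  set B := dotForm n with hBdef
  set W : Submodule (ZMod 2) (Fin n → ZMod 2) :=
    Submodule.span (ZMod 2) (indVec '' (F : Set (Finset (Fin n)))) with hW
  -- generators are pairwise orthogonal
  have hgen : ∀ A ∈ F, ∀ C ∈ F, B (indVec A) (indVec C) = 0 := by
    intro A hA C hC
    rw [hBdef, dotForm_indVec]
    exact (ZMod.natCast_eq_zero_iff _ _).mpr (h A hA C hC)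
  -- W is totally isotropic
  have hWorth : W ≤ B.orthogonal W := by
    intro w hw
    rw [LinearMap.BilinForm.mem_orthogonal_iff]
    intro v hv
    induction hv using Submodule.span_induction with
    | mem x hx =>
      obtain ⟨A, hA, rfl⟩ := hx
      induction hw using Submodule.span_induction with
      | mem y hy =>
        obtain ⟨C, hC, rfl⟩ := hy
        exact hgen A hA C hC
      | zero => simp
      | add y z _ _ hy hz => simp [hy, hz]
      | smul c y _ hy => simp [hy]
    | zero => simp
    | add x y _ _ hx hy => simp [hx, hy]
    | smul c x _ hx => simp [hx]
  -- dimension bound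
  have hdim : finrank (ZMod 2) W ≤ n / 2 := by
    have h1 := LinearMap.BilinForm.finrank_orthogonal dotForm_nondegenerate W
    have h2 : finrank (ZMod 2) W ≤ finrank (ZMod 2) (B.orthogonal W) :=
      Submodule.finrank_mono hWorth
    have h3 : finrank (ZMod 2) (Fin n → ZMod 2) = n := by simp
    rw [← hBdef, h3] at h1
    omega
  -- cardinality of W
  have : Fintype W := Fintype.ofFinite W
  have hcard : Fintype.card W = 2 ^ finrank (ZMod 2) W := by
    have := card_eq_pow_finrank (K := ZMod 2) (V := W)
    simpa using this
  -- F injects into W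
  have hle : F.card ≤ Fintype.card W := by
    have : F.card = Fintype.card F := (Fintype.card_coe F).symm
    rw [this]
    exact Fintype.card_le_of_injective
      (fun A => ⟨indVec A.1, Submodule.subset_span ⟨A.1, A.2, rfl⟩⟩)
      (by
        intro A C hAC
        have := indVec_injective (congr_arg Subtype.val hAC)
        exact Subtype.ext this)
  calc F.card ≤ Fintype.card W := hle
    _ = 2 ^ finrank (ZMod 2) W := hcard
    _ ≤ 2 ^ (n / 2) := Nat.pow_le_pow_right (by norm_num) hdim
end

section
/- Let \mathbb{F} be a field, b_1,...,b_d \in \mathbb{F}, and let z be the number of indices i with b_i = 0. Define the bilinear form b(v,w) = \sum_{i=1}^d b_i v(i) w(i) on \mathbb{F}^d. If V is a subspace of \mathbb{F}^d such that b(v,w) = 0 for all v, w \in V, then dim(V) \leq (d+z)/2. -/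
open Module LinearMap


open Finset

/-- If `b(v,w) = ∑ bᵢ v(i) w(i)` vanishes on `V × V`, then `dim V ≤ (d + z)/2`,
where `z` is the number of zero coefficients among the `bᵢ`. -/
theorem bilinear_selforthogonal_dim {𝔽 : Type*} [Field 𝔽] {d : ℕ} (b : Fin d → 𝔽)
    (V : Submodule 𝔽 (Fin d → 𝔽))
    (hV : ∀ v ∈ V, ∀ w ∈ V, ∑ i, b i * v i * w i = 0) :
    2 * Module.finrank 𝔽 V ≤ d + {i : Fin d | b i = 0}.ncard := by
  classical
  set B : LinearMap.BilinForm 𝔽 (Fin d → 𝔽) :=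
    LinearMap.mk₂ 𝔽 (fun x y => ∑ i, x i * y i)
      (by intros; simp [add_mul, Finset.sum_add_distrib])
      (by intros; simp [mul_assoc, Finset.mul_sum])
      (by intros; simp [mul_add, Finset.sum_add_distrib])
      (by intros; simp [Finset.mul_sum]; ring_nf; simp [mul_assoc, mul_comm, mul_left_comm])
    with hB
  have hBapp : ∀ x y, B x y = ∑ i, x i * y i := fun x y => rfl
  have hrefl : B.IsRefl := by
    intro x y h
    rw [hBapp] at h ⊢
    simpa [mul_comm] using h
  have hnd : B.Nondegenerate := by
    refine (LinearMap.IsRefl.nondegenerate_iff_separatingLeft hrefl).mpr ?_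
    intro x hx
    funext i
    have := hx (Pi.single i 1)
    rw [hBapp] at this
    simpa [Pi.single_apply, Finset.sum_ite_eq'] using this
  set T : (Fin d → 𝔽) →ₗ[𝔽] (Fin d → 𝔽) := (Matrix.diagonal b).mulVecLin with hT
  have hTapp : ∀ v i, T v i = b i * v i := by
    intro v i
    simp [hT, Matrix.mulVecLin_apply, Matrix.mulVec_diagonal]
  set W := V.map T with hW
  -- V ≤ orthogonal of W
  have hVle : V ≤ B.orthogonal W := by
    intro v hv
    intro n hn
    obtain ⟨u, hu, rfl⟩ := hn
    show B (T u) v = 0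
    rw [hBapp]
    have := hV u hu v hv
    simp only [hTapp]
    simpa using this
  -- finrank orthogonal
  have horth : finrank 𝔽 (B.orthogonal W) = d - finrank 𝔽 W := by
    rw [LinearMap.BilinForm.finrank_orthogonal hnd, finrank_pi]
    simp
  have h1 : finrank 𝔽 V ≤ d - finrank 𝔽 W := horth ▸ Submodule.finrank_mono hVle
  -- rank nullity on T restricted to V
  have h2 : finrank 𝔽 W + finrank 𝔽 (ker (T.domRestrict V)) = finrank 𝔽 V := by
    rw [hW, ← LinearMap.range_domRestrict]
    exact LinearMap.finrank_range_add_finrank_ker _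
  have h3 : finrank 𝔽 (ker (T.domRestrict V)) ≤ finrank 𝔽 (ker T) := by
    rw [LinearMap.ker_domRestrict, ← Submodule.finrank_map_subtype_eq,
      Submodule.map_comap_subtype]
    exact Submodule.finrank_mono inf_le_right
  -- finrank ker T = z
  have hrank : finrank 𝔽 (LinearMap.range T) = Fintype.card {i // b i ≠ 0} := by
    rw [← Matrix.rank_diagonal b]
    rfl
  have h4 : finrank 𝔽 (LinearMap.range T) + finrank 𝔽 (ker T) = d := by
    rw [LinearMap.finrank_range_add_finrank_ker, finrank_pi]
    simp
  have hz : {i : Fin d | b i = 0}.ncard = Fintype.card {i // b i = 0} := by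
    rw [← Nat.card_coe_set_eq, Nat.card_eq_fintype_card]
    exact Fintype.card_congr (Equiv.refl _)
  have hcard : Fintype.card {i // b i ≠ 0} + Fintype.card {i : Fin d // b i = 0} = d := by
    have hc := Fintype.card_subtype_compl (fun i : Fin d => b i = 0)
    have hle := Fintype.card_subtype_le (fun i : Fin d => b i = 0)
    rw [Fintype.card_fin] at hc hle
    simp only [ne_eq]
    omega
  have hWd : finrank 𝔽 W ≤ d := by
    have := Submodule.finrank_le W
    rwa [finrank_pi, Fintype.card_fin] at this
  rw [hz]
  omega
end

section
/- Let p be a prime and let V be a subspace of \mathbb{F}_p^n. Then the number of 0-1 vectors in V is at most 2^{dim(V)}. -/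
open Module Set

/-- Odlyzko: a subspace `V ≤ 𝔽_p^n` contains at most `2 ^ dim V` zero-one vectors. -/
theorem zero_one_vectors_in_subspace {p n : ℕ} (hp : p.Prime) [Fact p.Prime]
    (V : Submodule (ZMod p) (Fin n → ZMod p)) :
    {v : Fin n → ZMod p | v ∈ V ∧ ∀ i, v i = 0 ∨ v i = 1}.ncard
      ≤ 2 ^ Module.finrank (ZMod p) V := by
  classical
  set F := ZMod p
  set φ : Fin n → Module.Dual F V := fun i => (LinearMap.proj i).comp V.subtype with hφ
  -- the coordinate functionals span the dual of V
  have hspan : Submodule.span F (Set.range φ) = ⊤ := by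
    rw [eq_top_iff]
    intro f _
    obtain ⟨g, hg⟩ := V.subtype.dualMap_surjective_of_injective V.injective_subtype f
    have : f = ∑ i : Fin n, g (fun j => if i = j then (1:F) else 0) • φ i := by
      ext v
      have hv : (v : Fin n → F) = ∑ i, (v : Fin n → F) i • (fun j => if i = j then (1:F) else 0) :=
        pi_eq_sum_univ (v : Fin n → F)
      have : f v = g (v : Fin n → F) := by rw [← hg]; rfl
      rw [this, hv]
      simp [φ, mul_comm]
    rw [this]
    exact Submodule.sum_mem _ fun i _ =>
      Submodule.smul_mem _ _ (Submodule.subset_span (Set.mem_range_self i))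
  obtain ⟨b, hbsub, hbspan, hbindep⟩ := exists_linearIndependent F (Set.range φ)
  rw [hspan] at hbspan
  have hbfin : b.Finite := hbindep.setFinite
  haveI : Fintype b := hbfin.fintype
  have hcard : Fintype.card b ≤ Module.finrank F V := by
    have := hbindep.fintype_card_le_finrank
    rwa [Subspace.dual_finrank_eq] at this
  -- injection into functions b → {0,1}
  set S := {v : Fin n → F | v ∈ V ∧ ∀ i, v i = 0 ∨ v i = 1} with hS
  have hinj : ∃ (Φ : S → (b → ({0, 1} : Set F))), Function.Injective Φ := by
    refine ⟨fun v f => ⟨(f : Module.Dual F V) ⟨v.1, v.2.1⟩, ?_⟩, ?_⟩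
    · obtain ⟨i, hi⟩ := hbsub f.2
      rw [← hi]
      exact v.2.2 i
    · intro v w h
      have key : ∀ f : Module.Dual F V,
          f (⟨v.1, v.2.1⟩ - ⟨w.1, w.2.1⟩ : V) = 0 := by
        intro f
        have hf : f ∈ Submodule.span F b := hbspan ▸ Submodule.mem_top
        induction hf using Submodule.span_induction with
        | mem x hx =>
            have := congrFun h ⟨x, hx⟩
            have hx' : x ⟨v.1, v.2.1⟩ = x ⟨w.1, w.2.1⟩ := congrArg Subtype.val this
            simp [map_sub, hx', sub_eq_zero]
        | zero => simp
        | add x y _ _ hx hy => simp [hx, hy]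
        | smul a x _ hx => simp [hx]
      have := (Module.forall_dual_apply_eq_zero_iff F _).mp key
      have h2 : (⟨v.1, v.2.1⟩ : V) = ⟨w.1, w.2.1⟩ := sub_eq_zero.mp this
      have h3 : (v : Fin n → F) = w := congrArg (fun x : V => (x : Fin n → F)) h2
      exact Subtype.ext h3
  obtain ⟨Φ, hΦ⟩ := hinj
  have h1 : S.ncard ≤ Nat.card (b → ({0, 1} : Set F)) := by
    rw [← Nat.card_coe_set_eq]
    exact Nat.card_le_card_of_injective Φ hΦ
  refine h1.trans ?_
  have h01 : Nat.card ({0, 1} : Set F) ≤ 2 := by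
    have : ({0, 1} : Set F).ncard ≤ 2 := by
      apply (Set.ncard_insert_le _ _).trans
      simp
    rwa [Nat.card_coe_set_eq]
  calc Nat.card (b → ({0, 1} : Set F)) = Nat.card ({0, 1} : Set F) ^ Fintype.card b := by
        simp [Nat.card_fun, Nat.card_eq_fintype_card]
    _ ≤ 2 ^ Fintype.card b := Nat.pow_le_pow_left h01 _
    _ ≤ 2 ^ Module.finrank F V := Nat.pow_le_pow_right (by norm_num) hcard
end

section
/- Let \ell, m, n be positive integers and let A_1,...,A_m, B_1,...,B_m \subset [n] be sets such that \ell does not divide |A_i \cap B_i| for each i \in [m], but \ell divides |A_i \cap B_j| whenever i \neq j. Then m \leq s n, where s is the number of distinct prime divisors of \ell. -/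
open Finset

lemma key_div {p a : ℕ} (hp : p.Prime) {ι : Type*} [Fintype ι] [DecidableEq ι]
    (d : ι → ι → ℕ) (hd : ∀ i, ¬ p ^ a ∣ d i i) (ho : ∀ i j, i ≠ j → p ^ a ∣ d i j)
    (g : ι → ℤ) (heq : ∀ j, ∑ i, g i * (d i j : ℤ) = 0) : ∀ j, g j = 0 := by
  have hstep : ∀ t : ℕ, (∀ j, (p : ℤ) ^ t ∣ g j) → ∀ j, (p : ℤ) ^ (t + 1) ∣ g j := by
    intro t ih j
    have hdj0 : d j j ≠ 0 := fun h => hd j (h ▸ dvd_zero _)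
    set c := (d j j).factorization p with hc
    have hcd : p ^ c ∣ d j j := Nat.ordProj_dvd _ _
    have hca : c < a := by
      by_contra hca
      exact hd j ((pow_dvd_pow p (le_of_not_gt hca)).trans hcd)
    set e : ℕ := d j j / p ^ c with he
    have hde : d j j = p ^ c * e := (Nat.ordProj_mul_ordCompl_eq_self _ _).symm
    have hpe : ¬ p ∣ e := Nat.not_dvd_ordCompl hp hdj0
    have hsum : g j * (d j j : ℤ) = -∑ i ∈ univ.erase j, g i * (d i j : ℤ) := by
      have := heq j
      rw [← Finset.add_sum_erase _ _ (mem_univ j)] at this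
      linarith
    have hdvd : (p : ℤ) ^ (t + a) ∣ g j * (d j j : ℤ) := by
      rw [hsum]
      apply dvd_neg.2
      apply Finset.dvd_sum
      intro i hi
      rw [pow_add]
      exact mul_dvd_mul (ih i) (by exact_mod_cast ho i j (mem_erase.1 hi).1)
    have hdvd2 : (p : ℤ) ^ (t + a - c) ∣ g j * (e : ℤ) := by
      have h1 : (p : ℤ) ^ c * ((p:ℤ) ^ (t + a - c)) ∣ (p:ℤ) ^ c * (g j * e) := by
        rw [← pow_add]
        have hexp : c + (t + a - c) = t + a := by omega
        rw [hexp]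
        calc (p:ℤ) ^ (t + a) ∣ g j * (d j j : ℤ) := hdvd
          _ = (p:ℤ)^c * (g j * e) := by push_cast [hde]; ring
      exact (mul_dvd_mul_iff_left (pow_ne_zero c (by exact_mod_cast hp.ne_zero))).1 h1
    have hcop : IsCoprime ((p : ℤ) ^ (t + a - c)) (e : ℤ) := by
      apply IsCoprime.pow_left
      rw [Nat.isCoprime_iff_coprime]
      exact (Nat.Prime.coprime_iff_not_dvd hp).2 hpe
    have := hcop.dvd_of_dvd_mul_left (by rwa [mul_comm] at hdvd2)
    exact (pow_dvd_pow (p:ℤ) (by omega)).trans this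
  have hall : ∀ t : ℕ, ∀ j, (p : ℤ) ^ t ∣ g j := by
    intro t
    induction t with
    | zero => simp
    | succ t ih => exact hstep t ih
  intro j
  by_contra hgj
  obtain ⟨t, ht⟩ : ∃ t : ℕ, (g j).natAbs < p ^ t := ⟨(g j).natAbs, Nat.lt_pow_self hp.one_lt⟩
  have h1 : (p : ℤ) ^ t ≤ |g j| := Int.le_of_dvd (abs_pos.2 hgj) ((dvd_abs _ _).2 (hall t j))
  rw [Int.abs_eq_natAbs] at h1
  have : (p:ℤ)^t < (p:ℤ)^t := lt_of_le_of_lt h1 (by exact_mod_cast ht)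
  exact lt_irrefl _ this

/-- Oddtown mod `ℓ`: if `ℓ ∤ |Aᵢ ∩ Bᵢ|` but `ℓ ∣ |Aᵢ ∩ Bⱼ|` for `i ≠ j`,
then `m ≤ s·n`, where `s` is the number of distinct prime divisors of `ℓ`. -/
theorem oddtown_mod_ell {ℓ m n : ℕ} (hℓ : 1 ≤ ℓ) (hm : 1 ≤ m) (hn : 1 ≤ n)
    (A B : Fin m → Finset (Fin n))
    (hdiag : ∀ i, ¬ ℓ ∣ (A i ∩ B i).card)
    (hoff : ∀ i j, i ≠ j → ℓ ∣ (A i ∩ B j).card) :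
    m ≤ ℓ.primeFactors.card * n := by
  classical
  set S : ℕ → Finset (Fin m) :=
    fun p => univ.filter (fun i => ¬ p ^ (ℓ.factorization p) ∣ (A i ∩ B i).card) with hS
  -- each S p has card ≤ n
  have hcard : ∀ p ∈ ℓ.primeFactors, (S p).card ≤ n := by
    intro p hpf
    have hp : p.Prime := Nat.prime_of_mem_primeFactors hpf
    set a := ℓ.factorization p
    -- linear independence
    have hli : LinearIndependent ℤ
        (fun (i : (S p : Finset (Fin m))) => (fun x => if x ∈ A i.1 then (1:ℤ) else 0 : Fin n → ℤ)) := by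
      rw [Fintype.linearIndependent_iff]
      intro g hg
      apply key_div hp (fun i j => (A i.1 ∩ B j.1).card)
        (fun i => by have h2 := i.2; simp only [hS, mem_filter, mem_univ, true_and] at h2; exact h2)
        (fun i j hij => dvd_trans (Nat.ordProj_dvd ℓ p) (hoff i.1 j.1 (fun h => hij (Subtype.ext h))))
      intro j
      have hx : ∀ x : Fin n, ∑ i : (S p : Finset (Fin m)), g i * (if x ∈ A i.1 then (1:ℤ) else 0) = 0 := by
        intro x
        have := congrFun hg x
        simpa using this
      calc ∑ i : (S p : Finset (Fin m)), g i * ((A i.1 ∩ B j.1).card : ℤ)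
          = ∑ i : (S p : Finset (Fin m)), g i * ∑ x ∈ B j.1, (if x ∈ A i.1 then (1:ℤ) else 0) := by
            apply Finset.sum_congr rfl
            intro i _
            congr 1
            rw [Finset.sum_ite_mem, Finset.inter_comm]
            simp
        _ = ∑ i : (S p : Finset (Fin m)), ∑ x ∈ B j.1, g i * (if x ∈ A i.1 then (1:ℤ) else 0) := by
            exact Finset.sum_congr rfl fun i _ => Finset.mul_sum _ _ _
        _ = ∑ x ∈ B j.1, ∑ i : (S p : Finset (Fin m)), g i * (if x ∈ A i.1 then (1:ℤ) else 0) :=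
            Finset.sum_comm
        _ = 0 := Finset.sum_eq_zero fun x _ => hx x
    have := hli.fintype_card_le_finrank
    simpa using this
  -- covering
  have hcover : (univ : Finset (Fin m)) ⊆ ℓ.primeFactors.biUnion S := by
    intro i _
    rw [Finset.mem_biUnion]
    by_contra hcon
    push_neg at hcon
    apply hdiag i
    have hd0 : (A i ∩ B i).card ≠ 0 := fun h => hdiag i (h ▸ dvd_zero _)
    rw [← Nat.factorization_le_iff_dvd (by omega) hd0]
    intro p
    by_cases hpf : p ∈ ℓ.primeFactors
    · have hp := Nat.prime_of_mem_primeFactors hpf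
      have := hcon p hpf
      rw [hS] at this
      simp only [mem_filter, mem_univ, true_and, not_not] at this
      exact (Nat.Prime.pow_dvd_iff_le_factorization hp hd0).1 this
    · have : ℓ.factorization p = 0 := by
        rw [← Nat.support_factorization] at hpf
        exact Finsupp.notMem_support_iff.mp hpf
      omega
  calc m = (univ : Finset (Fin m)).card := by simp
    _ ≤ (ℓ.primeFactors.biUnion S).card := Finset.card_le_card hcover
    _ ≤ ∑ p ∈ ℓ.primeFactors, (S p).card := Finset.card_biUnion_le
    _ ≤ ℓ.primeFactors.card * n := Finset.sum_le_card_nsmul _ _ _ hcard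
end

section
/- Let \ell, m, n be positive integers with \ell = p^{\alpha} a prime power, and let A_1,...,A_m, B_1,...,B_m \subset [n] be such that p^{\alpha} does not divide |A_i \cap B_i| for each i, while p^{\alpha} divides |A_i \cap B_j| for all i \neq j. Then the characteristic vectors of A_1,...,A_m are linearly independent over \mathbb{Q}; in particular m \leq n. -/
/-- Prime power oddtown: if `p^α ∤ |Aᵢ ∩ Bᵢ|` but `p^α ∣ |Aᵢ ∩ Bⱼ|` for `i ≠ j`,
then the characteristic vectors of the `Aᵢ` are linearly independent over `ℚ`;
in particular `m ≤ n`. -/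
theorem prime_power_oddtown {p α m n : ℕ} (hp : p.Prime) (hα : 1 ≤ α)
    (hm : 1 ≤ m) (hn : 1 ≤ n)
    (A B : Fin m → Finset (Fin n))
    (hdiag : ∀ i, ¬ p ^ α ∣ (A i ∩ B i).card)
    (hoff : ∀ i j, i ≠ j → p ^ α ∣ (A i ∩ B j).card) :
    LinearIndependent ℚ (fun i : Fin m => fun j : Fin n => if j ∈ A i then (1 : ℚ) else 0)
      ∧ m ≤ n := by
  have hpZ : Prime (p : ℤ) := Int.prime_iff_natAbs_prime.mpr (by simpa using hp)
  -- the key induction: any integer relation has all coefficients divisible by p^k for all k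
  have hpow : ∀ k : ℕ, ∀ c : Fin m → ℤ,
      (∀ j, ∑ i, c i * ((A i ∩ B j).card : ℤ) = 0) → ∀ i, (p : ℤ) ^ k ∣ c i := by
    intro k
    induction k with
    | zero => intro c _ i; simp
    | succ k ih =>
      intro c hrel i
      have hdvd : ∀ j, (p : ℤ) ∣ c j := by
        intro j
        by_contra hpc
        have h0 := hrel j
        rw [← Finset.add_sum_erase Finset.univ _ (Finset.mem_univ j)] at h0
        have h1 : ((p : ℤ)) ^ α ∣ c j * ((A j ∩ B j).card : ℤ) := by
          have : c j * ((A j ∩ B j).card : ℤ)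
              = -∑ i ∈ Finset.univ.erase j, c i * ((A i ∩ B j).card : ℤ) := by
            linarith [h0]
          rw [this]
          refine dvd_neg.mpr (Finset.dvd_sum fun i hi => Dvd.dvd.mul_left ?_ _)
          have hij : i ≠ j := Finset.ne_of_mem_erase hi
          exact_mod_cast Int.natCast_dvd_natCast.mpr (hoff i j hij)
        have hcop : IsCoprime ((p : ℤ) ^ α) (c j) :=
          ((Prime.coprime_iff_not_dvd hpZ).mpr hpc).pow_left
        have h2 : ((p : ℤ)) ^ α ∣ ((A j ∩ B j).card : ℤ) :=
          hcop.dvd_of_dvd_mul_left h1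
        exact hdiag j (by exact_mod_cast h2)
      choose d hd using hdvd
      have hrel' : ∀ j, ∑ i, d i * ((A i ∩ B j).card : ℤ) = 0 := by
        intro j
        have h0 := hrel j
        have : (p : ℤ) * ∑ i, d i * ((A i ∩ B j).card : ℤ) = 0 := by
          rw [Finset.mul_sum]
          rw [← h0]
          exact Finset.sum_congr rfl fun i _ => by rw [hd i]; ring
        have hpne : (p : ℤ) ≠ 0 := by exact_mod_cast hp.ne_zero
        exact (mul_eq_zero.mp this).resolve_left hpne
      have := ih d hrel' i
      rw [hd i, pow_succ']
      exact mul_dvd_mul_left _ this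
  have key : LinearIndependent ℚ
      (fun i : Fin m => fun j : Fin n => if j ∈ A i then (1 : ℚ) else 0) := by
    rw [Fintype.linearIndependent_iff]
    intro g hg
    -- dot product with characteristic vector of B j
    have hdot : ∀ j, ∑ i, g i * ((A i ∩ B j).card : ℚ) = 0 := by
      intro j
      have card_eq : ∀ i, ((A i ∩ B j).card : ℚ)
          = ∑ x : Fin n, (if x ∈ A i then (1 : ℚ) else 0) * (if x ∈ B j then (1 : ℚ) else 0) := by
        intro i
        have : ∀ x : Fin n, (if x ∈ A i then (1 : ℚ) else 0) * (if x ∈ B j then (1 : ℚ) else 0)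
            = if x ∈ A i ∩ B j then (1 : ℚ) else 0 := by
          intro x
          by_cases h1 : x ∈ A i <;> by_cases h2 : x ∈ B j <;>
            simp [h1, h2, Finset.mem_inter]
        rw [Finset.sum_congr rfl fun x _ => this x, Finset.sum_boole]
        norm_cast
        congr 1
        ext x
        simp [Finset.mem_inter]
      calc ∑ i, g i * ((A i ∩ B j).card : ℚ)
          = ∑ i, ∑ x : Fin n, (g i * (if x ∈ A i then (1 : ℚ) else 0))
              * (if x ∈ B j then (1 : ℚ) else 0) := by
            refine Finset.sum_congr rfl fun i _ => ?_
            rw [card_eq i, Finset.mul_sum]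
            exact Finset.sum_congr rfl fun x _ => by ring
        _ = ∑ x : Fin n, (∑ i, g i * (if x ∈ A i then (1 : ℚ) else 0))
              * (if x ∈ B j then (1 : ℚ) else 0) := by
            rw [Finset.sum_comm]
            exact Finset.sum_congr rfl fun x _ => by rw [Finset.sum_mul]
        _ = 0 := by
            refine Finset.sum_eq_zero fun x _ => ?_
            have hx := congrFun hg x
            simp only [Finset.sum_apply, Pi.smul_apply, smul_eq_mul, Pi.zero_apply] at hx
            rw [hx, zero_mul]
    -- clear denominators
    set N : ℕ := ∏ i, (g i).den with hN
    have hNpos : 0 < N := Finset.prod_pos fun i _ => (g i).pos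
    have hden : ∀ i : Fin m, (g i).den ∣ N := fun i => Finset.dvd_prod_of_mem _ (Finset.mem_univ i)
    set c : Fin m → ℤ := fun i => (g i).num * (N / (g i).den : ℕ) with hc
    have hcast : ∀ i, (c i : ℚ) = g i * N := by
      intro i
      have hd0 : ((g i).den : ℚ) ≠ 0 := by
        exact_mod_cast (g i).den_nz
      have hq : ((N / (g i).den : ℕ) : ℚ) = (N : ℚ) / ((g i).den : ℚ) :=
        Nat.cast_div (hden i) hd0
      show (((g i).num * ((N / (g i).den : ℕ) : ℤ) : ℤ) : ℚ) = g i * N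
      rw [Int.cast_mul, Int.cast_natCast, hq]
      conv_rhs => rw [← Rat.num_div_den (g i)]
      field_simp
    have hrelZ : ∀ j, ∑ i, c i * ((A i ∩ B j).card : ℤ) = 0 := by
      intro j
      have : ((∑ i, c i * ((A i ∩ B j).card : ℤ) : ℤ) : ℚ) = 0 := by
        push_cast
        calc ∑ i, (c i : ℚ) * ((A i ∩ B j).card : ℚ)
            = (N : ℚ) * ∑ i, g i * ((A i ∩ B j).card : ℚ) := by
              rw [Finset.mul_sum]
              exact Finset.sum_congr rfl fun i _ => by rw [hcast i]; ring
          _ = 0 := by rw [hdot j, mul_zero]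
      exact_mod_cast this
    have hc0 : ∀ i, c i = 0 := by
      intro i
      by_contra h
      have h1 : (p : ℤ) ^ (c i).natAbs ∣ c i := hpow (c i).natAbs c hrelZ i
      have h2 : (c i).natAbs < ((p : ℤ) ^ (c i).natAbs).natAbs := by
        rw [Int.natAbs_pow, Int.natAbs_natCast]
        exact Nat.lt_pow_self hp.one_lt
      exact h (Int.eq_zero_of_dvd_of_natAbs_lt_natAbs h1 h2)
    intro i
    have := hcast i
    rw [hc0 i] at this
    have hN0 : (N : ℚ) ≠ 0 := by exact_mod_cast hNpos.ne'
    have := (mul_eq_zero.mp this.symm).resolve_right hN0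
    exact this
  refine ⟨key, ?_⟩
  have h1 := key.fintype_card_le_finrank
  simpa using h1
end

section
/- Let \ell, k be positive integers and \mathcal{F} \subset \mathbb{Z}_{\ell}^n. If \mathcal{F} is k-closed, then the span \langle \mathcal{F} \rangle over \mathbb{Z}_{\ell} is also k-closed. -/
open Finset

/-- `F ⊆ (ℤ_ℓ)^n` is `k`-closed if for all `1 ≤ i ≤ k`, the coordinate-wise product of any
`i` members of `F` has coordinate sum zero. -/
def KClosed {ℓ n : ℕ} (k : ℕ) (F : Set (Fin n → ZMod ℓ)) : Prop :=
  ∀ i : ℕ, 1 ≤ i → i ≤ k → ∀ f : Fin i → (Fin n → ZMod ℓ), (∀ j, f j ∈ F) →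
    ∑ x : Fin n, ∏ j, f j x = 0

/-- A multilinear map vanishing on tuples from `F` vanishes on tuples from `span R F`. -/
lemma multilinear_vanish {R M N : Type*} [CommSemiring R] [AddCommMonoid M] [Module R M]
    [AddCommMonoid N] [Module R N] {ι : Type*} [Fintype ι] [DecidableEq ι]
    (g : MultilinearMap R (fun _ : ι => M) N) (F : Set M)
    (h : ∀ f : ι → M, (∀ j, f j ∈ F) → g f = 0) :
    ∀ f : ι → M, (∀ j, f j ∈ Submodule.span R F) → g f = 0 := by
  have key : ∀ s : Finset ι, ∀ f : ι → M, (∀ j ∈ s, f j ∈ Submodule.span R F) →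
      (∀ j ∉ s, f j ∈ F) → g f = 0 := by
    intro s
    induction s using Finset.induction_on with
    | empty => intro f _ hf; exact h f (fun j => hf j (by simp))
    | @insert a s ha ih =>
      intro f hspan hmem
      have hfa : f a ∈ Submodule.span R F := hspan a (Finset.mem_insert_self a s)
      have main : ∀ v ∈ Submodule.span R F, g (Function.update f a v) = 0 := by
        intro v hv
        induction hv using Submodule.span_induction with
        | mem v hvF =>
          apply ih
          · intro j hj
            have hja : j ≠ a := fun hja => ha (hja ▸ hj)
            rw [Function.update_of_ne hja]
            exact hspan j (Finset.mem_insert_of_mem hj)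
          · intro j hj
            by_cases hja : j = a
            · subst hja; simpa using hvF
            · rw [Function.update_of_ne hja]
              exact hmem j (by simp [hj, hja])
        | zero => simpa using g.map_coord_zero (m := Function.update f a 0) a (by simp)
        | add v w _ _ hv hw => rw [g.map_update_add]; rw [hv, hw, add_zero]
        | smul c v _ hv => rw [g.map_update_smul, hv, smul_zero]
      have := main (f a) hfa
      simpa using this
  intro f hf
  exact key Finset.univ f (fun j _ => hf j) (fun j hj => absurd (Finset.mem_univ j) hj)

/-- If `F ⊆ (ℤ_ℓ)^n` is `k`-closed, then so is its span over `ℤ_ℓ`. -/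
theorem kClosed_span {ℓ n k : ℕ} (hℓ : 1 ≤ ℓ) (hk : 1 ≤ k)
    (F : Set (Fin n → ZMod ℓ)) (hF : KClosed k F) :
    KClosed k (Submodule.span (ZMod ℓ) F : Set (Fin n → ZMod ℓ)) := by
  intro i hi1 hik f hf
  set g : MultilinearMap (ZMod ℓ) (fun _ : Fin i => (Fin n → ZMod ℓ)) (ZMod ℓ) :=
    ∑ x : Fin n, (MultilinearMap.mkPiAlgebra (ZMod ℓ) (Fin i) (ZMod ℓ)).compLinearMap
      (fun _ => LinearMap.proj x) with hg
  have hgapp : ∀ f' : Fin i → (Fin n → ZMod ℓ), g f' = ∑ x : Fin n, ∏ j, f' j x := by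
    intro f'
    simp [hg, MultilinearMap.mkPiAlgebra_apply]
  have := multilinear_vanish g F (fun f' hf' => by rw [hgapp]; exact hF i hi1 hik f' hf') f hf
  rwa [hgapp] at this
end

section
/- Let p be a prime, let V be a subspace of \mathbb{F}_p^n, and let A_1,...,A_d be a partition of [n] such that every vector in V is constant on each A_i. Suppose that \sum_{i=1}^n u(i) v(i) = 0 for all u, v \in V (i.e., V is 2-closed). If dim(V) \geq d - h, then at least d - 2h of the numbers |A_1|,...,|A_d| are divisible by p. -/
open Finset

/-- If `V ≤ 𝔽_p^n` is 2-closed, constant on each block of a partition `A₁,…,A_d` of `[n]`,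
and `dim V ≥ d - h`, then at least `d - 2h` of the block sizes are divisible by `p`. -/
theorem twins_sizes_divisible {p n d h : ℕ} (hp : p.Prime) [Fact p.Prime]
    (V : Submodule (ZMod p) (Fin n → ZMod p))
    (A : Fin d → Finset (Fin n))
    (hne : ∀ i, (A i).Nonempty)
    (hdisj : ∀ i j, i ≠ j → Disjoint (A i) (A j))
    (hcover : Finset.univ.biUnion A = Finset.univ)
    (hconst : ∀ v ∈ V, ∀ i, ∀ a ∈ A i, ∀ b ∈ A i, v a = v b)
    (hclosed : ∀ u ∈ V, ∀ v ∈ V, ∑ x, u x * v x = 0)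
    (hdim : d - h ≤ Module.finrank (ZMod p) V) :
    d - 2 * h ≤ (Finset.univ.filter fun i : Fin d => p ∣ (A i).card).card := by
  classical
  haveI : NeZero p := ⟨hp.ne_zero⟩
  set rep : Fin d → Fin n := fun i => (hne i).choose with hrep
  have hrepmem : ∀ i, rep i ∈ A i := fun i => (hne i).choose_spec
  set c : Fin d → ZMod p := fun i => ((A i).card : ZMod p) with hc
  -- the "value on block" map
  let φ : V →ₗ[ZMod p] (Fin d → ZMod p) :=
    { toFun := fun v i => (v : Fin n → ZMod p) (rep i)
      map_add' := fun _ _ => rfl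
      map_smul' := fun _ _ => rfl }
  have hφ : ∀ (v : V) (i : Fin d), φ v i = (v : Fin n → ZMod p) (rep i) := fun _ _ => rfl
  have hφinj : ∀ v : V, φ v = 0 → v = 0 := by
    intro v hv
    apply Subtype.ext
    funext x
    have hx : x ∈ Finset.univ.biUnion A := by rw [hcover]; exact mem_univ x
    obtain ⟨i, -, hxi⟩ := mem_biUnion.mp hx
    calc (v : Fin n → ZMod p) x = (v : Fin n → ZMod p) (rep i) :=
          hconst v v.2 i x hxi (rep i) (hrepmem i)
      _ = φ v i := rfl
      _ = 0 := by rw [hv]; rfl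
  -- block decomposition of the inner product
  have hblock : ∀ u v : V,
      (∑ x, (u : Fin n → ZMod p) x * (v : Fin n → ZMod p) x)
        = ∑ i, c i * (φ u i * φ v i) := by
    intro u v
    have hpd : ((Finset.univ : Finset (Fin d)) : Set (Fin d)).PairwiseDisjoint A :=
      fun i _ j _ hij => hdisj i j hij
    calc (∑ x, (u : Fin n → ZMod p) x * (v : Fin n → ZMod p) x)
        = ∑ x ∈ Finset.univ.biUnion A, (u : Fin n → ZMod p) x * (v : Fin n → ZMod p) x := by
          rw [hcover]
      _ = ∑ i, ∑ x ∈ A i, (u : Fin n → ZMod p) x * (v : Fin n → ZMod p) x :=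
          Finset.sum_biUnion hpd
      _ = ∑ i, c i * (φ u i * φ v i) := by
          refine Finset.sum_congr rfl fun i _ => ?_
          have hcongr : ∀ x ∈ A i,
              (u : Fin n → ZMod p) x * (v : Fin n → ZMod p) x = φ u i * φ v i := by
            intro x hx
            rw [hφ, hφ, hconst u u.2 i x hx (rep i) (hrepmem i),
              hconst v v.2 i x hx (rep i) (hrepmem i)]
          rw [Finset.sum_congr rfl hcongr, Finset.sum_const, nsmul_eq_mul]
  set G : Finset (Fin d) := Finset.univ.filter fun i => p ∣ (A i).card with hG
  set Bd : Finset (Fin d) := Finset.univ.filter fun i => ¬ p ∣ (A i).card with hBd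
  have hcne : ∀ j : Fin d, j ∈ Bd → c j ≠ 0 := by
    intro j hj
    have := (mem_filter.mp hj).2
    simpa [hc, ZMod.natCast_eq_zero_iff] using this
  -- the key isotropy relation over the "bad" blocks
  have hkey : ∀ u v : V, ∑ j ∈ Bd, c j * (φ u j * φ v j) = 0 := by
    intro u v
    have h0 := hclosed u u.2 v v.2
    rw [hblock u v] at h0
    have hsplit := Finset.sum_filter_add_sum_filter_not Finset.univ
      (fun i => p ∣ (A i).card) (fun i => c i * (φ u i * φ v i))
    have hGzero : ∑ j ∈ G, c j * (φ u j * φ v j) = 0 := by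
      refine Finset.sum_eq_zero fun j hj => ?_
      have hdvd := (mem_filter.mp hj).2
      have : c j = 0 := by
        simpa [hc, ZMod.natCast_eq_zero_iff] using hdvd
      rw [this, zero_mul]
    rw [← hG, ← hBd, hGzero, zero_add] at hsplit
    rw [hsplit, h0]
  -- restriction to bad coordinates
  let ψ : V →ₗ[ZMod p] ({ j // j ∈ Bd } → ZMod p) :=
    { toFun := fun v j => φ v j.1
      map_add' := fun _ _ => rfl
      map_smul' := fun _ _ => rfl }
  set W : Submodule (ZMod p) ({ j // j ∈ Bd } → ZMod p) := LinearMap.range ψ with hW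
  -- the diagonal bilinear form on bad coordinates
  let B : LinearMap.BilinForm (ZMod p) ({ j // j ∈ Bd } → ZMod p) :=
    LinearMap.mk₂ (ZMod p) (fun x y => ∑ j, c j.1 * x j * y j)
      (fun x x' y => by
        rw [← Finset.sum_add_distrib]
        exact Finset.sum_congr rfl fun j _ => by simp [add_mul, mul_add])
      (fun a x y => by
        simp only [smul_eq_mul, Finset.mul_sum, Pi.smul_apply]
        exact Finset.sum_congr rfl fun j _ => by ring)
      (fun x y y' => by
        rw [← Finset.sum_add_distrib]
        exact Finset.sum_congr rfl fun j _ => by simp [mul_add])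
      (fun a x y => by
        simp only [smul_eq_mul, Finset.mul_sum, Pi.smul_apply]
        exact Finset.sum_congr rfl fun j _ => by ring)
  have hBapp : ∀ x y, B x y = ∑ j, c j.1 * x j * y j := fun _ _ => rfl
  have hBsymm : ∀ x y, B x y = B y x := by
    intro x y
    rw [hBapp, hBapp]
    exact Finset.sum_congr rfl fun j _ => by ring
  have hBrefl : B.IsRefl := fun x y hxy => by rw [hBsymm]; exact hxy
  have hBnd : B.Nondegenerate := by
    refine (LinearMap.IsRefl.nondegenerate_iff_separatingLeft hBrefl).mpr ?_
    intro x hx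
    funext j
    show x j = 0
    have hj := hx (Pi.single j 1)
    rw [hBapp] at hj
    have hsum : ∑ k, c k.1 * x k * Pi.single (M := fun _ : { j // j ∈ Bd } => ZMod p) j 1 k = c j.1 * x j := by
      rw [Finset.sum_eq_single j (fun k _ hk => by simp [Pi.single_apply, hk])
        (fun hj' => absurd (mem_univ j) hj')]
      simp
    rw [hsum] at hj
    exact (mul_eq_zero.mp hj).resolve_left (hcne j.1 j.2)
  -- W is totally isotropic
  have hWiso : W ≤ B.orthogonal W := by
    rintro _ ⟨v, rfl⟩
    rw [LinearMap.BilinForm.mem_orthogonal_iff]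
    rintro _ ⟨u, rfl⟩
    show B (ψ u) (ψ v) = 0
    rw [hBapp, ← hkey u v, ← Finset.sum_coe_sort Bd (fun j => c j * (φ u j * φ v j))]
    exact Finset.sum_congr rfl fun j _ => (mul_assoc _ _ _)
  -- dimension counts
  have hfinM : Module.finrank (ZMod p) ({ j // j ∈ Bd } → ZMod p) = Bd.card := by
    rw [Module.finrank_fintype_fun_eq_card, Fintype.card_coe]
  have hWbound : 2 * Module.finrank (ZMod p) W ≤ Bd.card := by
    have h1 : Module.finrank (ZMod p) W ≤ Module.finrank (ZMod p) (B.orthogonal W) :=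
      Submodule.finrank_mono hWiso
    rw [LinearMap.BilinForm.finrank_orthogonal hBnd W, hfinM] at h1
    have h2 : Module.finrank (ZMod p) W ≤ Bd.card := hfinM ▸ Submodule.finrank_le W
    omega
  -- kernel bound
  let χ : LinearMap.ker ψ →ₗ[ZMod p] ({ j // j ∈ G } → ZMod p) :=
    { toFun := fun v j => φ v.1 j.1
      map_add' := fun _ _ => rfl
      map_smul' := fun _ _ => rfl }
  have hχinj : Function.Injective χ := by
    intro v w hvw
    apply Subtype.ext
    have hmem : ∀ i : Fin d, φ v.1 i = φ w.1 i := by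
      intro i
      by_cases hdvd : p ∣ (A i).card
      · have hiG : i ∈ G := mem_filter.mpr ⟨mem_univ i, hdvd⟩
        exact congrFun hvw ⟨i, hiG⟩
      · have hiB : i ∈ Bd := mem_filter.mpr ⟨mem_univ i, hdvd⟩
        have h1 : ψ v.1 = 0 := v.2
        have h2 : ψ w.1 = 0 := w.2
        have := congrFun h1 ⟨i, hiB⟩
        have := congrFun h2 ⟨i, hiB⟩
        calc φ v.1 i = ψ v.1 ⟨i, hiB⟩ := rfl
          _ = 0 := congrFun h1 ⟨i, hiB⟩
          _ = ψ w.1 ⟨i, hiB⟩ := (congrFun h2 ⟨i, hiB⟩).symm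
          _ = φ w.1 i := rfl
    have : φ (v.1 - w.1) = 0 := by
      funext i
      rw [map_sub]
      simpa [sub_eq_zero] using hmem i
    have := hφinj _ this
    rwa [sub_eq_zero] at this
  have hkerbound : Module.finrank (ZMod p) (LinearMap.ker ψ) ≤ G.card := by
    have := LinearMap.finrank_le_finrank_of_injective hχinj
    rwa [Module.finrank_fintype_fun_eq_card, Fintype.card_coe] at this
  have hrn : Module.finrank (ZMod p) W + Module.finrank (ZMod p) (LinearMap.ker ψ)
      = Module.finrank (ZMod p) V := LinearMap.finrank_range_add_finrank_ker ψ
  have hcard : G.card + Bd.card = d := by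
    have := Finset.card_filter_add_card_filter_not
      (s := (Finset.univ : Finset (Fin d))) (p := fun i => p ∣ (A i).card)
    simpa [hG, hBd] using this
  show d - 2 * h ≤ G.card
  omega
end

section
/- Let \ell, k be positive integers and let s be the number of distinct prime divisors of \ell. If \mathcal{F} \subset 2^{[n]} is weakly k-closed over \mathbb{Z}_\ell (the intersection of any k distinct members of \mathcal{F} has size divisible by \ell), then there exists \mathcal{F}' \subset \mathcal{F} with |\mathcal{F}'| \geq |\mathcal{F}| - s k^2 n such that \mathcal{F}' is k-closed over \mathbb{Z}_\ell (the intersection of any k not-necessarily-distinct members has size divisible by \ell). -/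
open Finset

set_option linter.unnecessarySimpa false
set_option linter.deprecated false

namespace WeaklyClosedAux


variable {n : ℕ}

def Estep (FF : ℕ → Finset (Fin n)) (GG : ℕ → Finset (Finset (Fin n))) (t : ℕ) :
    Finset (Finset (Fin n)) := insert (FF t) (GG t)

def aliveSet (F : Finset (Finset (Fin n))) (FF : ℕ → Finset (Fin n))
    (GG : ℕ → Finset (Finset (Fin n))) (t : ℕ) : Finset (Finset (Fin n)) :=
  F \ (Finset.range t).biUnion (Estep FF GG)

def Aset (FF : ℕ → Finset (Fin n)) (GG : ℕ → Finset (Finset (Fin n))) (t : ℕ) :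
    Finset (Fin n) := (insert (FF t) (GG t)).inf id

def Goodseq (k p a : ℕ) (F : Finset (Finset (Fin n))) (FF : ℕ → Finset (Fin n))
    (GG : ℕ → Finset (Finset (Fin n))) (T : ℕ) : Prop :=
  ∀ t, t < T →
    FF t ∈ aliveSet F FF GG t ∧
    GG t ⊆ F.erase (FF t) ∧
    (GG t).card ≤ k - 2 ∧
    ¬ (p ^ a ∣ (Aset FF GG t).card) ∧
    (∀ H ∈ aliveSet F FF GG (t+1),
      p ^ ((Aset FF GG t).card.factorization p + 1) ∣ (Aset FF GG t ∩ H).card) ∧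
    (∀ t', t' < t → p ^ ((Aset FF GG t).card.factorization p) ∣ (Aset FF GG t ∩ FF t').card)

lemma aliveSet_anti (F : Finset (Finset (Fin n))) (FF : ℕ → Finset (Fin n))
    (GG : ℕ → Finset (Finset (Fin n))) {r s : ℕ} (h : r ≤ s) :
    aliveSet F FF GG s ⊆ aliveSet F FF GG r :=
  sdiff_subset_sdiff (subset_refl _)
    (biUnion_subset_biUnion_of_subset_left _ (range_subset_range.2 h))

lemma Aset_subset_FF (FF : ℕ → Finset (Fin n)) (GG : ℕ → Finset (Finset (Fin n)))
    (t : ℕ) : Aset FF GG t ⊆ FF t := by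
  have : (insert (FF t) (GG t)).inf id ≤ id (FF t) :=
    Finset.inf_le (mem_insert_self _ _)
  simpa [Aset] using this

lemma sum_ind_mul_ind (s t : Finset (Fin n)) :
    ∑ x : Fin n, (if x ∈ s then (1:ℚ) else 0) * (if x ∈ t then (1:ℚ) else 0)
      = ((s ∩ t).card : ℚ) := by
  have h : ∀ x : Fin n, (if x ∈ s then (1:ℚ) else 0) * (if x ∈ t then (1:ℚ) else 0)
      = if x ∈ s ∩ t then (1:ℚ) else 0 := by
    intro x
    by_cases hs : x ∈ s <;> by_cases ht : x ∈ t <;> simp [hs, ht]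
  rw [Finset.sum_congr rfl fun x _ => h x, Finset.sum_ite_mem, univ_inter]
  simp

/-- decomposition of a nonzero integer into p-power times p-unit -/
lemma int_decomp {p : ℕ} (hp : p.Prime) {z : ℤ} (hz : z ≠ 0) :
    ∃ y : ℤ, z = (p:ℤ) ^ (z.natAbs.factorization p) * y ∧ ¬ (p:ℤ) ∣ y := by
  set m := z.natAbs
  have hm : m ≠ 0 := Int.natAbs_ne_zero.2 hz
  have hdec := Nat.ordProj_mul_ordCompl_eq_self m p
  have hnd : ¬ p ∣ m / p ^ m.factorization p := Nat.not_dvd_ordCompl hp hm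
  rcases Int.natAbs_eq z with h | h
  · refine ⟨(m / p ^ m.factorization p : ℕ), ?_, ?_⟩
    · rw [h]; exact_mod_cast (hdec.symm)
    · exact_mod_cast hnd
  · refine ⟨-(m / p ^ m.factorization p : ℕ), ?_, ?_⟩
    · rw [h]
      have h2 : (m:ℤ) = ((p ^ m.factorization p * (m / p ^ m.factorization p) : ℕ) : ℤ) := by
        exact_mod_cast hdec.symm
      rw [h2]; push_cast; ring
    · rw [Int.dvd_neg]; exact_mod_cast hnd

lemma goodseq_le {k p a : ℕ} (hp : p.Prime) {F : Finset (Finset (Fin n))}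
    {FF : ℕ → Finset (Fin n)} {GG : ℕ → Finset (Finset (Fin n))} {T : ℕ}
    (hg : Goodseq k p a F FF GG T) : T ≤ n := by
  classical
  by_contra hTn
  push_neg at hTn
  -- valuation of the witness cardinalities
  set b : ℕ → ℕ := fun t => ((Aset FF GG t).card.factorization p) with hb
  -- indicator vectors of the witness sets
  set v : Fin T → Fin n → ℚ := fun i x => if x ∈ Aset FF GG (i:ℕ) then 1 else 0 with hv
  have hli : ¬ LinearIndependent ℚ v := by
    intro h
    have hcard := h.fintype_card_le_finrank
    rw [Module.finrank_pi ℚ] at hcard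
    simp only [Fintype.card_fin] at hcard
    omega
  rw [Fintype.not_linearIndependent_iff] at hli
  obtain ⟨g, hgrel, i₀, hi₀⟩ := hli
  -- clear denominators
  set N : ℤ := ∏ j : Fin T, ((g j).den : ℤ) with hN
  set z : Fin T → ℤ := fun i => (g i).num * ∏ j ∈ univ.erase i, ((g j).den : ℤ) with hz
  have hzcast : ∀ i, ((z i : ℤ) : ℚ) = g i * (N : ℚ) := by
    intro i
    have hmul : (g i) * ((g i).den : ℚ) = ((g i).num : ℚ) := by
      exact Rat.mul_den_eq_num _
    push_cast [hz]
    calc ((g i).num : ℚ) * ∏ j ∈ univ.erase i, ((g j).den : ℚ)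
        = (g i * ((g i).den : ℚ)) * ∏ j ∈ univ.erase i, ((g j).den : ℚ) := by rw [hmul]
      _ = g i * (((g i).den : ℚ) * ∏ j ∈ univ.erase i, ((g j).den : ℚ)) := by ring
      _ = g i * (N : ℚ) := by
          rw [Finset.mul_prod_erase univ (fun j => ((g j).den : ℚ)) (mem_univ i)]
          push_cast [hN]
          ring
  have hzi₀ : z i₀ ≠ 0 := by
    apply mul_ne_zero
    · exact_mod_cast Rat.num_ne_zero.2 hi₀
    · apply Finset.prod_ne_zero_iff.2
      intro j _
      exact_mod_cast (g j).den_nz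
  -- support
  set S : Finset (Fin T) := univ.filter (fun i => z i ≠ 0) with hS
  have hSne : S.Nonempty := ⟨i₀, by simp [hS, hzi₀]⟩
  set α : Fin T → ℕ := fun i => (z i).natAbs.factorization p with hα
  set μ : ℕ := (S.image (fun i => α i + b i)).min' (hSne.image _) with hμ
  have hμle : ∀ i ∈ S, μ ≤ α i + b i := fun i hi =>
    min'_le _ _ (mem_image_of_mem _ hi)
  set S2 : Finset (Fin T) := S.filter (fun i => α i + b i = μ) with hS2
  have hS2ne : S2.Nonempty := by
    have := min'_mem (S.image (fun i => α i + b i)) (hSne.image _)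
    rw [mem_image] at this
    obtain ⟨i, hi, hie⟩ := this
    exact ⟨i, by simp [hS2, hi, hie, ← hμ]⟩
  set t₀ : Fin T := S2.max' hS2ne with ht₀
  have ht₀S2 : t₀ ∈ S2 := max'_mem _ _
  have ht₀S : t₀ ∈ S := (mem_filter.1 ht₀S2).1
  have ht₀μ : α t₀ + b t₀ = μ := (mem_filter.1 ht₀S2).2
  have hgt : ∀ i ∈ S, t₀ < i → μ + 1 ≤ α i + b i := by
    intro i hi hlt
    rcases Nat.lt_or_ge (α i + b i) (μ+1) with hle | hge
    · exfalso
      have : α i + b i = μ := le_antisymm (by omega) (hμle i hi)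
      have : i ∈ S2 := mem_filter.2 ⟨hi, this⟩
      exact absurd (le_max' _ _ this) (not_le.2 hlt)
    · exact hge
  -- the integer linear relation paired with χ_{FF t₀}
  set c : Fin T → ℕ := fun i => (Aset FF GG (i:ℕ) ∩ FF (t₀:ℕ)).card with hc
  have E0 : ∑ i : Fin T, z i * (c i : ℤ) = 0 := by
    set u : Fin n → ℚ := fun x => if x ∈ FF (t₀:ℕ) then 1 else 0 with hu
    have h1 : ∀ x : Fin n, ∑ i : Fin T, g i * v i x = 0 := by
      intro x
      have := congrFun hgrel x
      simpa [Finset.sum_apply] using this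
    have h2 : ∑ i : Fin T, g i * (c i : ℚ) = 0 := by
      have hcv : ∀ i : Fin T, (c i : ℚ) = ∑ x : Fin n, v i x * u x := by
        intro i
        rw [hc]
        exact (sum_ind_mul_ind _ _).symm
      calc ∑ i : Fin T, g i * (c i : ℚ)
          = ∑ i : Fin T, ∑ x : Fin n, g i * (v i x * u x) := by
            refine Finset.sum_congr rfl fun i _ => ?_
            rw [hcv i, Finset.mul_sum]
        _ = ∑ x : Fin n, ∑ i : Fin T, g i * (v i x * u x) := Finset.sum_comm
        _ = ∑ x : Fin n, (∑ i : Fin T, g i * v i x) * u x := by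
            refine Finset.sum_congr rfl fun x _ => ?_
            rw [Finset.sum_mul]
            refine Finset.sum_congr rfl fun i _ => by ring
        _ = 0 := by
            refine Finset.sum_eq_zero fun x _ => ?_
            rw [h1 x, zero_mul]
    have h3 : ∑ i : Fin T, ((z i : ℚ)) * (c i : ℚ) = 0 := by
      calc ∑ i : Fin T, ((z i : ℚ)) * (c i : ℚ)
          = ∑ i : Fin T, (g i * (N:ℚ)) * (c i : ℚ) := by
            refine Finset.sum_congr rfl fun i _ => by rw [hzcast i]
        _ = (∑ i : Fin T, g i * (c i : ℚ)) * (N:ℚ) := by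
            rw [Finset.sum_mul]
            refine Finset.sum_congr rfl fun i _ => by ring
        _ = 0 := by rw [h2, zero_mul]
    exact_mod_cast h3
  -- divisibility of all the other terms
  have hother : ∀ i ∈ univ.erase t₀, ((p:ℤ)) ^ (μ + 1) ∣ z i * (c i : ℤ) := by
    intro i hi
    have hine : i ≠ t₀ := (mem_erase.1 hi).1
    by_cases hzi : z i = 0
    · simp [hzi]
    have hiS : i ∈ S := by simp [hS, hzi]
    have hαdvd : ((p:ℤ)) ^ (α i) ∣ z i := by
      rw [← Int.natAbs_dvd_natAbs]
      simp only [Int.natAbs_pow, Int.natAbs_natCast]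
      exact Nat.ordProj_dvd _ _
    rcases lt_or_gt_of_ne (fun h : (i:ℕ) = (t₀:ℕ) => hine (Fin.ext h)) with hlt | hgt'
    · -- i < t₀ : use strict divisibility (G4)
      have hFt₀ : FF (t₀:ℕ) ∈ aliveSet F FF GG ((i:ℕ)+1) :=
        aliveSet_anti F FF GG (by omega) ((hg (t₀:ℕ) t₀.isLt).1)
      have hdvd : p ^ (b (i:ℕ) + 1) ∣ c i :=
        (hg (i:ℕ) i.isLt).2.2.2.2.1 _ hFt₀
      have h1 : ((p:ℤ)) ^ (α i + (b (i:ℕ) + 1)) ∣ z i * (c i : ℤ) := by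
        rw [pow_add]
        exact mul_dvd_mul hαdvd (by exact_mod_cast hdvd)
      exact dvd_trans (pow_dvd_pow _ (by have := hμle i hiS; omega)) h1
    · -- t₀ < i : use (G5) and min choice
      have hdvd : p ^ (b (i:ℕ)) ∣ c i :=
        (hg (i:ℕ) i.isLt).2.2.2.2.2 (t₀:ℕ) hgt'
      have h1 : ((p:ℤ)) ^ (α i + b (i:ℕ)) ∣ z i * (c i : ℤ) := by
        rw [pow_add]
        exact mul_dvd_mul hαdvd (by exact_mod_cast hdvd)
      have hge : μ + 1 ≤ α i + b (i:ℕ) := hgt i hiS (by exact hgt')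
      exact dvd_trans (pow_dvd_pow _ hge) h1
  -- hence p^(μ+1) divides the main term
  have hmain : ((p:ℤ)) ^ (μ + 1) ∣ z t₀ * (c t₀ : ℤ) := by
    have hsum := E0
    rw [← Finset.add_sum_erase _ _ (mem_univ t₀)] at hsum
    have : z t₀ * (c t₀ : ℤ) = -∑ i ∈ univ.erase t₀, z i * (c i : ℤ) := by linarith
    rw [this]
    exact (dvd_neg).2 (Finset.dvd_sum hother)
  -- but the main term has valuation exactly μ
  have hct₀ : c t₀ = (Aset FF GG (t₀:ℕ)).card := by
    have hAe : Aset FF GG (t₀:ℕ) ∩ FF (t₀:ℕ) = Aset FF GG (t₀:ℕ) :=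
      inter_eq_left.2 (Aset_subset_FF FF GG _)
    simp only [hc, hAe]
  have hA0 : (Aset FF GG (t₀:ℕ)).card ≠ 0 := by
    intro h0
    exact (hg (t₀:ℕ) t₀.isLt).2.2.2.1 (h0 ▸ dvd_zero _)
  obtain ⟨y, hy, hynd⟩ := int_decomp hp (show z t₀ ≠ 0 from (mem_filter.1 ht₀S).2)
  have hAdec := Nat.ordProj_mul_ordCompl_eq_self (Aset FF GG (t₀:ℕ)).card p
  have hmnd : ¬ p ∣ (Aset FF GG (t₀:ℕ)).card / p ^ ((Aset FF GG (t₀:ℕ)).card.factorization p) :=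
    Nat.not_dvd_ordCompl hp hA0
  set m : ℕ := (Aset FF GG (t₀:ℕ)).card / p ^ ((Aset FF GG (t₀:ℕ)).card.factorization p) with hm
  have hterm : z t₀ * (c t₀ : ℤ) = (p:ℤ) ^ μ * (y * (m:ℤ)) := by
    rw [hy, hct₀]
    rw [show ((Aset FF GG (t₀:ℕ)).card : ℤ) = ((p:ℤ)) ^ (b (t₀:ℕ)) * (m:ℤ) by exact_mod_cast hAdec.symm]
    rw [← ht₀μ]
    ring
  rw [hterm] at hmain
  have hpdvd : ((p:ℤ)) ∣ y * (m:ℤ) := by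
    have hpne : ((p:ℤ)) ^ μ ≠ 0 := pow_ne_zero _ (by exact_mod_cast hp.ne_zero)
    have : ((p:ℤ)) ^ μ * (p:ℤ) ∣ ((p:ℤ)) ^ μ * (y * (m:ℤ)) := by
      rw [← pow_succ]
      exact hmain
    exact (mul_dvd_mul_iff_left hpne).1 this
  have hpint : Prime ((p:ℤ)) := Nat.prime_iff_prime_int.1 hp
  rcases hpint.dvd_mul.1 hpdvd with h | h
  · exact hynd h
  · exact hmnd (by exact_mod_cast h)



lemma aliveSet_subset (F : Finset (Finset (Fin n))) (FF : ℕ → Finset (Fin n))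
    (GG : ℕ → Finset (Finset (Fin n))) (t : ℕ) : aliveSet F FF GG t ⊆ F :=
  sdiff_subset

lemma FF_not_alive (F : Finset (Finset (Fin n))) (FF : ℕ → Finset (Fin n))
    (GG : ℕ → Finset (Finset (Fin n))) {t' t : ℕ} (h : t' < t) :
    FF t' ∉ aliveSet F FF GG t := by
  intro hmem
  rw [aliveSet, mem_sdiff] at hmem
  exact hmem.2 (mem_biUnion.2 ⟨t', mem_range.2 h, mem_insert_self _ _⟩)

/-- helper: inf of a doubly-inserted family -/
lemma inf_insert_insert (w1 H : Finset (Fin n)) (w2 : Finset (Finset (Fin n))) :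
    (insert w1 (insert H w2)).inf id = ((insert w1 w2).inf id) ∩ H := by
  rw [Finset.inf_insert, Finset.inf_insert, Finset.inf_insert]
  simp only [id_eq]
  rw [inf_comm (H : Finset (Fin n)), ← inf_assoc]
  rfl

lemma lemA {k p a : ℕ} (hk : 2 ≤ k) (hp : p.Prime)
    (F : Finset (Finset (Fin n)))
    (hq : ∀ S ⊆ F, S.card = k → p ^ a ∣ (S.inf id).card) :
    ∃ bad ⊆ F, bad.card ≤ (k - 1) * n ∧
      ∀ Tv ∈ F \ bad, ∀ G ⊆ F.erase Tv, G.card ≤ k - 2 →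
        p ^ a ∣ ((insert Tv G).inf id).card := by
  classical
  set SeqGood : ℕ → Prop := fun T => ∃ FF GG, Goodseq (n := n) k p a F FF GG T with hSeqGood
  have h0 : SeqGood 0 := ⟨fun _ => ∅, fun _ => ∅, fun t ht => absurd ht (Nat.not_lt_zero t)⟩
  set Tstar := Nat.findGreatest SeqGood (n+1) with hTstar
  have hseq : SeqGood Tstar := Nat.findGreatest_spec (Nat.zero_le _) h0
  obtain ⟨FF, GG, hgood⟩ := hseq
  have hTn : Tstar ≤ n := goodseq_le hp hgood
  refine ⟨F \ aliveSet F FF GG Tstar, sdiff_subset, ?_, ?_⟩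
  · have hsub : F \ aliveSet F FF GG Tstar ⊆ (range Tstar).biUnion (Estep FF GG) := by
      intro x hx
      rw [mem_sdiff, aliveSet, mem_sdiff] at hx
      by_contra hnx
      exact hx.2 ⟨hx.1, hnx⟩
    calc (F \ aliveSet F FF GG Tstar).card
        ≤ ((range Tstar).biUnion (Estep FF GG)).card := card_le_card hsub
      _ ≤ ∑ t ∈ range Tstar, (Estep FF GG t).card := card_biUnion_le
      _ ≤ ∑ _t ∈ range Tstar, (k-1) := by
          refine Finset.sum_le_sum fun t ht => ?_
          have h1 := (hgood t (mem_range.1 ht)).2.2.1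
          calc (Estep FF GG t).card ≤ (GG t).card + 1 := card_insert_le _ _
            _ ≤ k - 1 := by omega
      _ = Tstar * (k-1) := by rw [Finset.sum_const, card_range, smul_eq_mul]
      _ ≤ n * (k-1) := Nat.mul_le_mul_right _ hTn
      _ = (k-1) * n := Nat.mul_comm _ _
  · intro Tv hTv G hG hGcard
    by_contra hndvd
    have hTvalive : Tv ∈ aliveSet F FF GG Tstar := by
      rw [mem_sdiff, mem_sdiff] at hTv
      push_neg at hTv
      exact hTv.2 hTv.1
    set val : Finset (Fin n) × Finset (Finset (Fin n)) → ℕ :=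
      fun FG => (((insert FG.1 FG.2).inf id).card).factorization p with hval
    set W : Finset (Finset (Fin n) × Finset (Finset (Fin n))) :=
      (aliveSet F FF GG Tstar ×ˢ F.powerset).filter
        (fun FG => FG.2 ⊆ F.erase FG.1 ∧ FG.2.card ≤ k - 2 ∧
          ¬ (p ^ a ∣ ((insert FG.1 FG.2).inf id).card)) with hW
    have hWmem : ∀ FG ∈ W, FG.1 ∈ aliveSet F FF GG Tstar ∧ FG.2 ⊆ F.erase FG.1 ∧
        FG.2.card ≤ k - 2 ∧ ¬ (p ^ a ∣ ((insert FG.1 FG.2).inf id).card) := by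
      intro FG hFG
      rw [hW, mem_filter, mem_product] at hFG
      exact ⟨hFG.1.1, hFG.2⟩
    have hWne : W.Nonempty := by
      refine ⟨(Tv, G), ?_⟩
      rw [hW, mem_filter, mem_product]
      exact ⟨⟨hTvalive, mem_powerset.2 (hG.trans (erase_subset _ _))⟩, hG, hGcard, hndvd⟩
    set μw : ℕ := (W.image val).min' (hWne.image _) with hμw
    set W2 := W.filter (fun FG => val FG = μw) with hW2
    have hW2ne : W2.Nonempty := by
      have hmm := min'_mem (W.image val) (hWne.image _)
      rw [mem_image] at hmm
      obtain ⟨w, hw, hwe⟩ := hmm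
      exact ⟨w, mem_filter.2 ⟨hw, hwe⟩⟩
    obtain ⟨w, hwW2, hwmax⟩ := Finset.exists_max_image W2 (fun FG => FG.2.card) hW2ne
    have hwW : w ∈ W := (mem_filter.1 hwW2).1
    have hwval : val w = μw := (mem_filter.1 hwW2).2
    obtain ⟨hw1, hw2sub, hw2card, hwnd⟩ := hWmem w hwW
    set Anew : Finset (Fin n) := (insert w.1 w.2).inf id with hAnew
    have hAnewfact : Anew.card.factorization p = μw := hwval
    have hAnew0 : Anew.card ≠ 0 := fun h0 => hwnd (h0 ▸ dvd_zero _)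
    have hμwa : μw < a := by
      rcases Nat.lt_or_ge μw a with h | h
      · exact h
      · exfalso
        refine hwnd ((pow_dvd_pow p h).trans ?_)
        rw [← hAnewfact]
        exact Nat.ordProj_dvd _ _
    have hw1nmem : w.1 ∉ w.2 := fun hmem => (mem_erase.1 (hw2sub hmem)).1 rfl
    have hw1F : w.1 ∈ F := aliveSet_subset F FF GG Tstar hw1
    set FF' : ℕ → Finset (Fin n) := Function.update FF Tstar w.1 with hFF'
    set GG' : ℕ → Finset (Finset (Fin n)) := Function.update GG Tstar w.2 with hGG'
    have hFT : FF' Tstar = w.1 := Function.update_self _ _ _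
    have hGT : GG' Tstar = w.2 := Function.update_self _ _ _
    have hFold : ∀ t', t' ≠ Tstar → FF' t' = FF t' := fun t' ht' =>
      Function.update_of_ne ht' _ _
    have hGold : ∀ t', t' ≠ Tstar → GG' t' = GG t' := fun t' ht' =>
      Function.update_of_ne ht' _ _
    have hEeq : ∀ t', t' < Tstar → Estep FF' GG' t' = Estep FF GG t' := by
      intro t' ht'
      rw [Estep, Estep, hFold t' (by omega), hGold t' (by omega)]
    have haliveeq : ∀ t, t ≤ Tstar → aliveSet F FF' GG' t = aliveSet F FF GG t := by
      intro t ht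
      rw [aliveSet, aliveSet]
      congr 1
      refine Finset.biUnion_congr rfl fun t' ht' => hEeq t' (by rw [mem_range] at ht'; omega)
    have hAeq : ∀ t, t < Tstar → Aset FF' GG' t = Aset FF GG t := by
      intro t ht
      rw [Aset, Aset, hFold t (by omega), hGold t (by omega)]
    have hAT : Aset FF' GG' Tstar = Anew := by
      rw [Aset, hFT, hGT]
    have hrange : (range (Tstar+1)).biUnion (Estep FF' GG')
        = insert w.1 w.2 ∪ (range Tstar).biUnion (Estep FF GG) := by
      rw [range_add_one, biUnion_insert]
      congr 1
      · rw [Estep, hFT, hGT]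
      · exact Finset.biUnion_congr rfl fun t' ht' => hEeq t' (mem_range.1 ht')
    have haliveT1 : aliveSet F FF' GG' (Tstar+1)
        = aliveSet F FF GG Tstar \ insert w.1 w.2 := by
      rw [aliveSet, hrange, aliveSet]
      ext x
      simp only [mem_sdiff, mem_union]
      tauto
    have hgood' : Goodseq k p a F FF' GG' (Tstar + 1) := by
      intro t ht
      rcases Nat.lt_or_ge t Tstar with htlt | htge
      · obtain ⟨o1, o2, o3, o4, o5, o6⟩ := hgood t htlt
        refine ⟨?_, ?_, ?_, ?_, ?_, ?_⟩
        · rw [haliveeq t (le_of_lt htlt), hFold t (by omega)]; exact o1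
        · rw [hFold t (by omega), hGold t (by omega)]; exact o2
        · rw [hGold t (by omega)]; exact o3
        · rw [hAeq t htlt]; exact o4
        · intro H hH
          rw [hAeq t htlt]
          refine o5 H ?_
          rwa [haliveeq (t+1) (by omega)] at hH
        · intro t' ht'
          rw [hAeq t htlt, hFold t' (by omega)]
          exact o6 t' ht'
      · have hteq : t = Tstar := by omega
        subst hteq
        refine ⟨?_, ?_, ?_, ?_, ?_, ?_⟩
        · rw [hFT, haliveeq Tstar le_rfl]; exact hw1
        · rw [hFT, hGT]; exact hw2sub
        · rw [hGT]; exact hw2card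
        · rw [hAT]; exact hwnd
        · -- the (G4) property for the new step
          intro H hH
          rw [hAT, hAnewfact]
          rw [haliveT1, mem_sdiff] at hH
          obtain ⟨hHalive, hHnin⟩ := hH
          rw [mem_insert] at hHnin
          push_neg at hHnin
          obtain ⟨hHne, hHnG⟩ := hHnin
          have hHF : H ∈ F := aliveSet_subset F FF GG Tstar hHalive
          have hHsub : insert H w.2 ⊆ F.erase w.1 := by
            intro x hx
            rcases mem_insert.1 hx with rfl | hx2
            · exact mem_erase.2 ⟨hHne, hHF⟩
            · exact hw2sub hx2
          have hcardins : (insert H w.2).card = w.2.card + 1 := card_insert_of_notMem hHnG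
          have hkey : (insert w.1 (insert H w.2)).inf id = Anew ∩ H := by
            rw [hAnew]; exact inf_insert_insert _ _ _
          by_cases hdv : p ^ a ∣ (Anew ∩ H).card
          · exact (pow_dvd_pow p (by omega : μw + 1 ≤ a)).trans hdv
          · rcases Nat.lt_or_ge (w.2.card + 1) (k - 1) with hsmall | hbig
            · have hWmem' : (w.1, insert H w.2) ∈ W := by
                rw [hW, mem_filter, mem_product]
                refine ⟨⟨hw1, mem_powerset.2 (hHsub.trans (erase_subset _ _))⟩, hHsub,
                  show (insert H w.2).card ≤ k - 2 by omega, ?_⟩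
                show ¬ (p ^ a ∣ ((insert w.1 (insert H w.2)).inf id).card)
                rw [hkey]; exact hdv
              have hvge : μw ≤ val (w.1, insert H w.2) :=
                min'_le _ _ (mem_image_of_mem _ hWmem')
              have hvne : val (w.1, insert H w.2) ≠ μw := by
                intro heq
                have hmem2 : (w.1, insert H w.2) ∈ W2 := mem_filter.2 ⟨hWmem', heq⟩
                have h9 : (insert H w.2).card ≤ w.2.card := hwmax _ hmem2
                omega
              have hvv : val (w.1, insert H w.2) = (Anew ∩ H).card.factorization p := by
                show ((insert w.1 (insert H w.2)).inf id).card.factorization p = _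
                rw [hkey]
              refine (Nat.Prime.pow_dvd_iff_le_factorization hp ?_).2 (by omega)
              intro h0; exact hdv (h0 ▸ dvd_zero _)
            · have hcardk : (insert w.1 (insert H w.2)).card = k := by
                rw [card_insert_of_notMem, hcardins]
                · omega
                · intro hmem
                  rcases mem_insert.1 hmem with h | h
                  · exact hHne h.symm
                  · exact hw1nmem h
              have hsubF : insert w.1 (insert H w.2) ⊆ F := by
                intro x hx
                rcases mem_insert.1 hx with rfl | hx2
                · exact hw1F
                · exact mem_of_mem_erase (hHsub hx2)
              have hqq := hq _ hsubF hcardk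
              rw [hkey] at hqq
              exact (pow_dvd_pow p (by omega : μw + 1 ≤ a)).trans hqq
        · -- the (G5) property for the new step
          intro t' ht'
          rw [hAT, hAnewfact, hFold t' (by omega)]
          have ho1 := (hgood t' ht').1
          have hFt'F : FF t' ∈ F := aliveSet_subset F FF GG t' ho1
          have hne : FF t' ≠ w.1 := by
            intro heq
            exact FF_not_alive F FF GG ht' (heq ▸ hw1)
          by_cases hmem : FF t' ∈ w.2
          · have hsub2 : Anew ⊆ FF t' := by
              rw [hAnew]
              have h1 : (insert w.1 w.2).inf id ≤ id (FF t') :=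
                Finset.inf_le (mem_insert_of_mem hmem)
              simpa using h1
            rw [inter_eq_left.2 hsub2, ← hAnewfact]
            exact Nat.ordProj_dvd _ _
          · have hHsub : insert (FF t') w.2 ⊆ F.erase w.1 := by
              intro x hx
              rcases mem_insert.1 hx with rfl | hx2
              · exact mem_erase.2 ⟨hne, hFt'F⟩
              · exact hw2sub hx2
            have hcardins : (insert (FF t') w.2).card = w.2.card + 1 :=
              card_insert_of_notMem hmem
            have hkey : (insert w.1 (insert (FF t') w.2)).inf id = Anew ∩ FF t' := by
              rw [hAnew]; exact inf_insert_insert _ _ _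
            by_cases hdv : p ^ a ∣ (Anew ∩ FF t').card
            · exact (pow_dvd_pow p (by omega : μw ≤ a)).trans hdv
            · rcases Nat.lt_or_ge (w.2.card + 1) (k - 1) with hsmall | hbig
              · have hWmem' : (w.1, insert (FF t') w.2) ∈ W := by
                  rw [hW, mem_filter, mem_product]
                  refine ⟨⟨hw1, mem_powerset.2 (hHsub.trans (erase_subset _ _))⟩, hHsub,
                    show (insert (FF t') w.2).card ≤ k - 2 by omega, ?_⟩
                  show ¬ (p ^ a ∣ ((insert w.1 (insert (FF t') w.2)).inf id).card)
                  rw [hkey]; exact hdv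
                have hvge : μw ≤ val (w.1, insert (FF t') w.2) :=
                  min'_le _ _ (mem_image_of_mem _ hWmem')
                have hvv : val (w.1, insert (FF t') w.2)
                    = (Anew ∩ FF t').card.factorization p := by
                  show ((insert w.1 (insert (FF t') w.2)).inf id).card.factorization p = _
                  rw [hkey]
                refine (Nat.Prime.pow_dvd_iff_le_factorization hp ?_).2 (by omega)
                intro h0; exact hdv (h0 ▸ dvd_zero _)
              · have hcardk : (insert w.1 (insert (FF t') w.2)).card = k := by
                  rw [card_insert_of_notMem, hcardins]
                  · omega
                  · intro hmem2
                    rcases mem_insert.1 hmem2 with h | h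
                    · exact hne h.symm
                    · exact hw1nmem h
                have hsubF : insert w.1 (insert (FF t') w.2) ⊆ F := by
                  intro x hx
                  rcases mem_insert.1 hx with rfl | hx2
                  · exact hw1F
                  · exact mem_of_mem_erase (hHsub hx2)
                have hqq := hq _ hsubF hcardk
                rw [hkey] at hqq
                exact absurd hqq hdv
    have h1 : Nat.findGreatest SeqGood (n+1) < Tstar + 1 := by rw [← hTstar]; omega
    have hgr : ¬ SeqGood (Tstar + 1) :=
      Nat.findGreatest_is_greatest h1 (by omega)
    exact hgr ⟨FF', GG', hgood'⟩


end WeaklyClosedAux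

/-- A weakly `k`-closed family can be made `k`-closed by removing at most `s·k²·n` sets,
where `s` is the number of distinct prime divisors of `ℓ`. -/
theorem weakly_closed_to_closed {ℓ k n : ℕ} (hℓ : 1 ≤ ℓ) (hk : 1 ≤ k)
    (F : Finset (Finset (Fin n)))
    (hweak : ∀ f : Fin k → Finset (Fin n), (∀ j, f j ∈ F) → Function.Injective f →
      ℓ ∣ (Finset.univ.inf f).card) :
    ∃ F' ⊆ F, F.card - ℓ.primeFactors.card * k ^ 2 * n ≤ F'.card ∧
      (∀ i : ℕ, 1 ≤ i → i ≤ k → ∀ f : Fin i → Finset (Fin n), (∀ j, f j ∈ F') →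
        ℓ ∣ (Finset.univ.inf f).card) := by
  classical
  have hSet : ∀ S ⊆ F, S.card = k → ℓ ∣ (S.inf id).card := by
    intro S hS hSc
    have hce : Fintype.card {x // x ∈ S} = k := by rw [Fintype.card_coe, hSc]
    set e := (Fintype.equivFinOfCardEq hce).symm with he
    set f : Fin k → Finset (Fin n) := fun j => (e j : Finset (Fin n)) with hf
    have hmem : ∀ j, f j ∈ F := fun j => hS (e j).2
    have hinj : Function.Injective f := fun x y hxy => e.injective (Subtype.ext hxy)
    have himg : univ.image f = S := by
      apply eq_of_subset_of_card_le
      · intro x hx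
        obtain ⟨j, _, rfl⟩ := mem_image.1 hx
        exact (e j).2
      · rw [card_image_of_injective _ hinj, card_univ, Fintype.card_fin, hSc]
    have hw := hweak f hmem hinj
    have hiff : Finset.univ.inf f = S.inf id := by
      rw [← himg, inf_image]
      rfl
    rwa [hiff] at hw
  rcases Nat.lt_or_ge k 2 with hk1 | hk2
  · -- k = 1
    refine ⟨F, subset_rfl, Nat.sub_le _ _ |>.trans le_rfl, ?_⟩
    intro i h1 h2 f hf
    have hik : i = k := by omega
    subst hik
    have hinj : Function.Injective f := by
      intro x y _
      have hi1 : i = 1 := by omega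
      subst hi1
      exact Subsingleton.elim x y
    exact hweak f hf hinj
  · have hbad : ∀ p ∈ ℓ.primeFactors, ∃ bad ⊆ F, bad.card ≤ (k-1)*n ∧
        ∀ Tv ∈ F \ bad, ∀ G ⊆ F.erase Tv, G.card ≤ k - 2 →
          p ^ (ℓ.factorization p) ∣ ((insert Tv G).inf id).card := by
      intro p hp
      exact WeaklyClosedAux.lemA hk2 (Nat.prime_of_mem_primeFactors hp) F
        (fun S hS hSc => (Nat.ordProj_dvd ℓ p).trans (hSet S hS hSc))
    choose bad hbadsub hbadcard hbadprop using hbad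
    set allbad := ℓ.primeFactors.attach.biUnion (fun p => bad p.1 p.2) with hallbad
    refine ⟨F \ allbad, sdiff_subset, ?_, ?_⟩
    · have hcardbad : allbad.card ≤ ℓ.primeFactors.card * ((k-1)*n) := by
        calc allbad.card ≤ ∑ p ∈ ℓ.primeFactors.attach, (bad p.1 p.2).card :=
              card_biUnion_le
          _ ≤ ∑ _p ∈ ℓ.primeFactors.attach, (k-1)*n :=
              Finset.sum_le_sum fun p _ => hbadcard p.1 p.2
          _ = ℓ.primeFactors.card * ((k-1)*n) := by
              rw [Finset.sum_const, card_attach, smul_eq_mul]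
      have h2 : ℓ.primeFactors.card * ((k-1)*n) ≤ ℓ.primeFactors.card * k^2 * n := by
        have hkk : (k-1) ≤ k^2 := by
          have : k ≤ k * k := Nat.le_mul_of_pos_left k (by omega)
          have hsq : k^2 = k * k := sq k
          omega
        calc ℓ.primeFactors.card * ((k-1)*n) = ℓ.primeFactors.card * (k-1) * n := by ring
          _ ≤ ℓ.primeFactors.card * k^2 * n :=
              Nat.mul_le_mul_right _ (Nat.mul_le_mul_left _ hkk)
      have h3 := card_le_card_sdiff_add_card (s := F) (t := allbad)
      omega
    · intro i h1 h2 f hf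
      set S := univ.image f with hSdef
      have hSsub : S ⊆ F \ allbad := by
        intro x hx
        obtain ⟨j, _, rfl⟩ := mem_image.1 hx
        exact hf j
      have hSF : S ⊆ F := hSsub.trans sdiff_subset
      have hinf : Finset.univ.inf f = S.inf id := by
        rw [hSdef, inf_image]
        rfl
      have hSne : S.Nonempty := ⟨f ⟨0, by omega⟩, mem_image_of_mem _ (mem_univ _)⟩
      have hS1 : 1 ≤ S.card := card_pos.2 hSne
      have hScard : S.card ≤ k := by
        have : S.card ≤ i := le_trans card_image_le (by simp)
        omega
      rw [hinf]
      by_cases hjk : S.card = k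
      · exact hSet S hSF hjk
      · obtain ⟨H₀, hH₀⟩ := hSne
        have hx : ∀ p, p ∈ ℓ.primeFactors → p ^ (ℓ.factorization p) ∣ (S.inf id).card := by
          intro p hp
          have hH₀' : H₀ ∈ F \ bad p hp := by
            have hss : F \ allbad ⊆ F \ bad p hp := by
              refine sdiff_subset_sdiff (subset_refl _) ?_
              rw [hallbad]
              exact subset_biUnion_of_mem (fun q => bad q.1 q.2) (mem_attach _ ⟨p, hp⟩)
            exact hss (hSsub hH₀)
          have hprop := hbadprop p hp H₀ hH₀' (S.erase H₀) (erase_subset_erase _ hSF)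
            (by rw [card_erase_of_mem hH₀]; omega)
          rwa [insert_erase hH₀] at hprop
        rcases Nat.eq_zero_or_pos (S.inf id).card with h0 | hpos
        · rw [h0]; exact dvd_zero _
        · rw [← Nat.factorization_le_iff_dvd (by omega) (by omega), Finsupp.le_iff]
          intro q hqsupp
          rw [Nat.support_factorization] at hqsupp
          exact (Nat.Prime.pow_dvd_iff_le_factorization
            (Nat.prime_of_mem_primeFactors hqsupp) (by omega)).1 (hx q hqsupp)
end

section
/- Let \ell, k \geq 2 and let \mathcal{F}_1,...,\mathcal{F}_k \subset 2^{[n]} be families such that \ell divides |F_1 \cap ... \cap F_k| for every choice F_1 \in \mathcal{F}_1, ..., F_k \in \mathcal{F}_k. Then |\mathcal{F}_1| \cdots |\mathcal{F}_k| \leq 2^{(k-1)n}. -/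
open Finset

section Aux
open Module Submodule

variable {K : Type*} [Field K] {ι : Type*} [Fintype ι] [DecidableEq ι]

set_option linter.unusedSectionVars false

lemma ci_proj_span_top :
    Submodule.span K (Set.range (fun x : ι => (LinearMap.proj x : (ι → K) →ₗ[K] K))) = ⊤ := by
  rw [eq_top_iff]
  intro φ _
  have hφ : φ = ∑ x : ι, φ (Pi.single x 1) • (LinearMap.proj x : (ι → K) →ₗ[K] K) := by
    apply LinearMap.ext
    intro v
    have hv : v = ∑ x : ι, Pi.single x (v x) := (Finset.univ_sum_single v).symm
    rw [LinearMap.sum_apply]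
    conv_lhs => rw [hv]
    rw [map_sum]
    apply Finset.sum_congr rfl
    intro x _
    have h1 : Pi.single x (v x) = v x • (Pi.single x (1:K) : ι → K) := by
      funext y
      by_cases hxy : y = x <;> simp [hxy, Pi.single_apply]
    rw [h1, map_smul, LinearMap.smul_apply, LinearMap.proj_apply, smul_eq_mul, smul_eq_mul,
      mul_comm]
  rw [hφ]
  exact Submodule.sum_mem _ (fun x _ => Submodule.smul_mem _ _ (Submodule.subset_span ⟨x, rfl⟩))

lemma ci_exists_pivot (U : Submodule K (ι → K)) :
    ∃ P : Finset ι, P.card = finrank K U ∧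
      (∀ v ∈ U, (∀ x ∈ P, v x = 0) → v = 0) ∧
      (∀ p ∈ P, ∃ u ∈ U, ∀ q ∈ P, u q = if q = p then (1:K) else 0) := by
  classical
  set ev : ι → Module.Dual K ↥U := fun x => U.dualRestrict (LinearMap.proj x) with hev
  have hspan : Submodule.span K (Set.range ev) = ⊤ := by
    have : Set.range ev
        = U.dualRestrict '' (Set.range (fun x : ι => (LinearMap.proj x : (ι → K) →ₗ[K] K))) := by
      rw [← Set.range_comp]; rfl
    rw [this, Submodule.span_image, ci_proj_span_top, Submodule.map_top,
      LinearMap.range_eq_top.mpr Subspace.dualRestrict_surjective]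
  obtain ⟨b, hb_sub, hb_span, hb_ind⟩ := exists_linearIndependent K (Set.range ev)
  rw [hspan] at hb_span
  have hfin : b.Finite := Set.Finite.subset (Set.finite_range ev) hb_sub
  haveI := hfin.fintype
  have hbasis : Fintype.card b = finrank K U := by
    have hB : Nonempty (Basis b K (Module.Dual K ↥U)) :=
      ⟨Basis.mk hb_ind (by rw [Subtype.range_coe]; exact hb_span.ge)⟩
    have := Module.finrank_eq_card_basis hB.some
    rw [Subspace.dual_finrank_eq] at this
    exact this.symm
  have hchoice : ∀ φ : b, ∃ x : ι, ev x = (φ : Module.Dual K ↥U) := fun φ => hb_sub φ.2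
  choose g hg using hchoice
  have hg_inj : Function.Injective g := by
    intro φ ψ hgeq
    have : (φ : Module.Dual K ↥U) = ψ := by rw [← hg φ, ← hg ψ, hgeq]
    exact Subtype.ext this
  set P : Finset ι := Finset.univ.image g with hP
  have hPcard : P.card = finrank K U := by
    rw [hP, Finset.card_image_of_injective _ hg_inj, Finset.card_univ, hbasis]
  have hzero : ∀ v ∈ U, (∀ x ∈ P, v x = 0) → v = 0 := by
    intro v hv hvanish
    have hall : ∀ ψ : Module.Dual K ↥U, ψ ⟨v, hv⟩ = 0 := by
      intro ψ
      have hmem : ψ ∈ Submodule.span K b := by rw [hb_span]; trivial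
      refine Submodule.span_induction ?_ ?_ ?_ ?_ hmem
      · intro φ hφ
        obtain ⟨φ', hφ'⟩ : ∃ φ' : b, (φ' : Module.Dual K ↥U) = φ := ⟨⟨φ, hφ⟩, rfl⟩
        rw [← hφ', ← hg φ']
        exact hvanish (g φ') (Finset.mem_image_of_mem g (Finset.mem_univ φ'))
      · rfl
      · intro a c _ _ ha hc; simp [ha, hc]
      · intro c a _ ha; simp [ha]
    funext x
    exact hall (ev x)
  refine ⟨P, hPcard, hzero, ?_⟩
  set r : ↥U →ₗ[K] (↥P → K) :=
    LinearMap.pi (fun q => (LinearMap.proj (q : ι)).comp U.subtype) with hr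
  have hr_inj : Function.Injective r := by
    rw [← LinearMap.ker_eq_bot, Submodule.eq_bot_iff]
    intro u hu
    have : (u : ι → K) = 0 := hzero u u.2 (fun x hx => congrFun hu ⟨x, hx⟩)
    exact Subtype.ext this
  have hr_surj : Function.Surjective r := by
    rw [← LinearMap.injective_iff_surjective_of_finrank_eq_finrank (by
      rw [Module.finrank_pi, ← hPcard]; simp)]
    exact hr_inj
  intro p hp
  obtain ⟨u, hu⟩ := hr_surj (fun q => if (q : ι) = p then (1:K) else 0)
  exact ⟨u, u.2, fun q hq => congrFun hu ⟨q, hq⟩⟩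

noncomputable def ciVec (K : Type*) [Field K] {ι : Type*} [DecidableEq ι] (F : Finset ι) :
    ι → K := fun x => if x ∈ F then 1 else 0

lemma ci_card_le_pow_finrank (𝓕 : Finset (Finset ι)) :
    𝓕.card ≤ 2 ^ finrank K (Submodule.span K ((ciVec K) '' (𝓕 : Set (Finset ι)))) := by
  classical
  set U := Submodule.span K ((ciVec K) '' (𝓕 : Set (Finset ι))) with hU
  obtain ⟨P, hPcard, hzero, -⟩ := ci_exists_pivot U
  have hinj : ∀ F ∈ 𝓕, ∀ G ∈ 𝓕,
      (fun q : ↥P => decide ((q : ι) ∈ F)) = (fun q : ↥P => decide ((q : ι) ∈ G)) → F = G := by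
    intro F hF G hG heq
    have hmemU : ciVec K F - ciVec K G ∈ U :=
      Submodule.sub_mem _ (Submodule.subset_span ⟨F, hF, rfl⟩)
        (Submodule.subset_span ⟨G, hG, rfl⟩)
    have hdiff : ciVec K F - ciVec K G = 0 := by
      apply hzero _ hmemU
      intro x hx
      have := congrFun heq ⟨x, hx⟩
      simp only [decide_eq_decide] at this
      simp [ciVec, this, Pi.sub_apply]
    ext x
    have hx := congrFun hdiff x
    simp only [Pi.sub_apply, Pi.zero_apply, sub_eq_zero, ciVec] at hx
    by_cases h1 : x ∈ F <;> by_cases h2 : x ∈ G <;> simp_all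
  have hle : 𝓕.card ≤ (Finset.univ : Finset (↥P → Bool)).card := by
    apply Finset.card_le_card_of_injOn (fun F => (fun q : ↥P => decide ((q : ι) ∈ F)))
      (fun _ _ => Finset.mem_univ _)
    intro F hF G hG heq
    exact hinj F hF G hG heq
  calc 𝓕.card ≤ (Finset.univ : Finset (↥P → Bool)).card := hle
    _ = 2 ^ P.card := by simp [Finset.card_univ]
    _ = 2 ^ finrank K U := by rw [hPcard]

lemma ci_finrank_mul_ge (U V : Submodule K (ι → K)) :
    finrank K U + finrank K V ≤ Fintype.card ι + finrank K ↥(U * V) := by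
  classical
  obtain ⟨P, hPcard, -, hPdelta⟩ := ci_exists_pivot U
  obtain ⟨Q, hQcard, -, hQdelta⟩ := ci_exists_pivot V
  choose! u hu hudelta using hPdelta
  choose! v hv hvdelta using hQdelta
  set w : ↥(P ∩ Q) → (ι → K) := fun p => u p * v p with hw
  have hind : LinearIndependent K w := by
    rw [Fintype.linearIndependent_iff]
    intro c hc q
    have hq := congrFun hc (q : ι)
    have hqP : (q : ι) ∈ P := Finset.mem_of_mem_inter_left q.2
    have hqQ : (q : ι) ∈ Q := Finset.mem_of_mem_inter_right q.2
    simp only [hw, Finset.sum_apply, Pi.smul_apply, Pi.mul_apply, smul_eq_mul,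
      Pi.zero_apply] at hq
    rw [Finset.sum_eq_single q] at hq
    · have hq1 := hudelta q hqP q hqP
      have hq2 := hvdelta q hqQ q hqQ
      simpa [hq1, hq2] using hq
    · intro p _ hpq
      have hpP : (p : ι) ∈ P := Finset.mem_of_mem_inter_left p.2
      have h1 := hudelta p hpP q hqP
      have hne : (q : ι) ≠ (p : ι) := fun hcon => hpq (Subtype.ext hcon.symm)
      simp [h1, if_neg hne]
      exact fun hqp => absurd hqp.symm hpq
    · intro hq'; exact absurd (Finset.mem_univ q) hq'
  have hspanle : Submodule.span K (Set.range w) ≤ U * V := by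
    rw [Submodule.span_le]
    rintro - ⟨p, rfl⟩
    exact Submodule.mul_mem_mul (hu p (Finset.mem_of_mem_inter_left p.2))
      (hv p (Finset.mem_of_mem_inter_right p.2))
  have hcardle : (P ∩ Q).card ≤ finrank K ↥(U * V) := by
    have h1 : finrank K ↥(Submodule.span K (Set.range w)) = Fintype.card ↥(P ∩ Q) :=
      finrank_span_eq_card hind
    have h2 := Submodule.finrank_mono hspanle
    rw [h1, Fintype.card_coe] at h2
    exact h2
  have hiu : P.card + Q.card = (P ∩ Q).card + (P ∪ Q).card :=
    (Finset.card_inter_add_card_union P Q).symm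
  have h3 : P.card + Q.card ≤ (P ∩ Q).card + Fintype.card ι := by
    rw [hiu]
    exact Nat.add_le_add_left (Finset.card_le_univ _) _
  rw [← hPcard, ← hQcard]
  omega

lemma ci_finrank_orth (U V : Submodule K (ι → K))
    (horth : ∀ u ∈ U, ∀ v ∈ V, ∑ x, u x * v x = 0) :
    finrank K U + finrank K V ≤ Fintype.card ι := by
  classical
  obtain ⟨P, hPcard, -, hPdelta⟩ := ci_exists_pivot U
  choose! u hu hudelta using hPdelta
  set r : ↥V →ₗ[K] (↥(Pᶜ) → K) :=
    LinearMap.pi (fun q => (LinearMap.proj (q : ι)).comp V.subtype) with hr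
  have hr_inj : Function.Injective r := by
    rw [← LinearMap.ker_eq_bot, Submodule.eq_bot_iff]
    intro x hx
    have hxc : ∀ y : ι, y ∉ P → (x : ι → K) y = 0 := by
      intro y hy
      exact congrFun hx ⟨y, Finset.mem_compl.mpr hy⟩
    have hxP : ∀ p ∈ P, (x : ι → K) p = 0 := by
      intro p hp
      have h0 := horth (u p) (hu p hp) (x : ι → K) x.2
      rw [← Finset.sum_add_sum_compl P] at h0
      have hc0 : ∑ y ∈ Pᶜ, u p y * (x : ι → K) y = 0 :=
        Finset.sum_eq_zero (fun y hy => by rw [hxc y (Finset.mem_compl.mp hy), mul_zero])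
      rw [hc0, add_zero] at h0
      have hP0 : ∑ y ∈ P, u p y * (x : ι → K) y = (x : ι → K) p := by
        rw [Finset.sum_eq_single p]
        · rw [hudelta p hp p hp, if_pos rfl, one_mul]
        · intro y hyP hyp
          rw [hudelta p hp y hyP, if_neg hyp, zero_mul]
        · intro hp'; exact absurd hp hp'
      rw [hP0] at h0
      exact h0
    have : (x : ι → K) = 0 := by
      funext y
      by_cases hy : y ∈ P
      · exact hxP y hy
      · exact hxc y hy
    exact Subtype.ext this
  have hV : finrank K V ≤ Pᶜ.card := by
    have := LinearMap.finrank_le_finrank_of_injective hr_inj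
    rwa [Module.finrank_pi, Fintype.card_coe] at this
  have hPc : Pᶜ.card = Fintype.card ι - P.card := Finset.card_compl P
  have hPle : P.card ≤ Fintype.card ι := Finset.card_le_univ _
  rw [← hPcard]
  omega

lemma ciVec_mul (A B : Finset ι) : ciVec K A * ciVec K B = ciVec K (A ∩ B) := by
  funext x
  simp only [ciVec, Pi.mul_apply, Finset.mem_inter]
  by_cases h1 : x ∈ A <;> by_cases h2 : x ∈ B <;> simp [h1, h2]

lemma ci_sum_vec (C : Finset ι) : ∑ x, ciVec K C x = (C.card : K) := by
  simp only [ciVec]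
  rw [Finset.sum_ite_mem, Finset.univ_inter, Finset.sum_const, nsmul_eq_mul, mul_one]

lemma ci_orth_span {S T : Set (ι → K)} (h : ∀ a ∈ S, ∀ b ∈ T, ∑ x, a x * b x = 0) :
    ∀ u ∈ Submodule.span K S, ∀ v ∈ Submodule.span K T, ∑ x, u x * v x = 0 := by
  intro u hu
  refine Submodule.span_induction ?_ ?_ ?_ ?_ hu
  · intro a ha v hv
    refine Submodule.span_induction ?_ ?_ ?_ ?_ hv
    · intro b hb; exact h a ha b hb
    · simp
    · intro x y _ _ hx hy
      simp only [Pi.add_apply, mul_add, Finset.sum_add_distrib, hx, hy, add_zero]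
    · intro c x _ hx
      simp only [Pi.smul_apply, smul_eq_mul, mul_comm, mul_left_comm, ← Finset.mul_sum]
      rw [hx, mul_zero]
  · intro v hv; simp
  · intro x y _ _ hx hy v hv
    simp only [Pi.add_apply, add_mul, Finset.sum_add_distrib, hx v hv, hy v hv, add_zero]
  · intro c x _ hx v hv
    simp only [Pi.smul_apply, smul_eq_mul]
    rw [show ∑ x_1, c * x x_1 * v x_1 = c * ∑ x_1, x x_1 * v x_1 by
      rw [Finset.mul_sum]; apply Finset.sum_congr rfl; intro y _; ring, hx v hv, mul_zero]

lemma ci_prod_span {κ : Type*} [DecidableEq κ] (F : κ → Finset (Finset ι))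
    (hne : ∀ i, (F i).Nonempty) (s : Finset κ) (hs : s.Nonempty) :
    ∏ i ∈ s, Submodule.span K (ciVec K '' (F i : Set (Finset ι))) =
      Submodule.span K (ciVec K ''
        {G : Finset ι | ∃ f : κ → Finset ι, (∀ i, f i ∈ F i) ∧ G = s.inf f}) := by
  induction hs using Finset.Nonempty.cons_induction with
  | singleton a =>
    rw [Finset.prod_singleton]
    congr 1
    ext w
    constructor
    · rintro ⟨G, hG, rfl⟩
      refine ⟨G, ⟨fun i => if i = a then G else (hne i).choose, fun i => ?_, by simp⟩, rfl⟩
      by_cases hia : i = a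
      · subst hia; simpa using hG
      · simpa [hia] using (hne i).choose_spec
    · rintro ⟨G, ⟨f, hf, rfl⟩, rfl⟩
      exact ⟨f a, by simpa using hf a, by simp⟩
  | cons a s ha hs ih =>
    rw [Finset.prod_cons, ih, Submodule.span_mul_span]
    congr 1
    ext w
    constructor
    · rw [Set.mem_mul]
      rintro ⟨x, ⟨g, hg, rfl⟩, y, ⟨G, ⟨f, hf, rfl⟩, rfl⟩, rfl⟩
      rw [ciVec_mul]
      refine ⟨_, ⟨fun i => if i = a then g else f i, fun i => ?_, ?_⟩, rfl⟩
      · by_cases hia : i = a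
        · subst hia; simpa using hg
        · simpa [hia] using hf i
      · rw [Finset.inf_cons]
        have h1 : s.inf (fun i => if i = a then g else f i) = s.inf f :=
          Finset.inf_congr rfl (fun i hi => by
            have : i ≠ a := fun hia => ha (hia ▸ hi)
            simp [this])
        simp [h1, Finset.inf_eq_inter]
    · rintro ⟨G, ⟨f, hf, rfl⟩, rfl⟩
      rw [Set.mem_mul]
      refine ⟨ciVec K (f a), ⟨f a, hf a, rfl⟩, ciVec K (s.inf f),
        ⟨s.inf f, ⟨f, hf, rfl⟩, rfl⟩, ?_⟩
      rw [ciVec_mul, Finset.inf_cons, Finset.inf_eq_inter]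

lemma ci_finrank_prod_chain {κ : Type*} [DecidableEq κ] (V : κ → Submodule K (ι → K))
    (s : Finset κ) (hs : s.Nonempty) :
    ∑ i ∈ s, finrank K (V i) + Fintype.card ι ≤
      finrank K ↥(∏ i ∈ s, V i) + s.card * Fintype.card ι := by
  induction hs using Finset.Nonempty.cons_induction with
  | singleton a => rw [Finset.prod_singleton]; simp
  | cons a s ha hs ih =>
    rw [Finset.prod_cons, Finset.sum_cons, Finset.card_cons]
    have h2 := ci_finrank_mul_ge (V a) (∏ i ∈ s, V i)
    have h3 : (s.card + 1) * Fintype.card ι = s.card * Fintype.card ι + Fintype.card ι := by ring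
    omega

end Aux

/-- Cross version: if `ℓ ∣ |F₁ ∩ ⋯ ∩ F_k|` for all choices `Fᵢ ∈ 𝓕ᵢ`, then
`|𝓕₁| ⋯ |𝓕_k| ≤ 2 ^ ((k-1)n)`. -/
theorem cross_intersections {ℓ k n : ℕ} (hℓ : 2 ≤ ℓ) (hk : 2 ≤ k)
    (F : Fin k → Finset (Finset (Fin n)))
    (h : ∀ f : (i : Fin k) → Finset (Fin n), (∀ i, f i ∈ F i) →
      ℓ ∣ (Finset.univ.inf f).card) :
    ∏ i, (F i).card ≤ 2 ^ ((k - 1) * n) := by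
  classical
  by_cases hne : ∀ i, (F i).Nonempty
  · set p := ℓ.minFac with hp'
    have hp : p.Prime := Nat.minFac_prime (by omega)
    haveI : Fact p.Prime := ⟨hp⟩
    set K := ZMod p with hK
    set V : Fin k → Submodule K (Fin n → K) :=
      fun i => Submodule.span K (ciVec K '' ((F i : Set (Finset (Fin n))))) with hV
    have hcard : ∀ i, (F i).card ≤ 2 ^ Module.finrank K (V i) := fun i =>
      ci_card_le_pow_finrank (K := K) (F i)
    set i₀ : Fin k := ⟨0, by omega⟩ with hi₀
    set s : Finset (Fin k) := Finset.univ.erase i₀ with hs'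
    have hscard : s.card = k - 1 := by
      rw [hs', Finset.card_erase_of_mem (Finset.mem_univ _), Finset.card_univ, Fintype.card_fin]
    have hs : s.Nonempty := by
      rw [← Finset.card_pos, hscard]; omega
    have hW : (∏ i ∈ s, V i) = Submodule.span K (ciVec K ''
        {G : Finset (Fin n) | ∃ f : Fin k → Finset (Fin n), (∀ i, f i ∈ F i) ∧ G = s.inf f}) := by
      rw [hV]
      exact ci_prod_span F hne s hs
    -- orthogonality of the generators
    have hgen : ∀ a ∈ ciVec K ''
        {G : Finset (Fin n) | ∃ f : Fin k → Finset (Fin n), (∀ i, f i ∈ F i) ∧ G = s.inf f},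
        ∀ b ∈ ciVec K '' ((F i₀ : Set (Finset (Fin n)))), ∑ x, a x * b x = 0 := by
      rintro - ⟨A, ⟨f, hf, rfl⟩, rfl⟩ - ⟨B, hB, rfl⟩
      have hsum : ∑ x, ciVec K (s.inf f) x * ciVec K B x = ((s.inf f ∩ B).card : K) := by
        calc ∑ x, ciVec K (s.inf f) x * ciVec K B x
            = ∑ x, (ciVec K (s.inf f) * ciVec K B) x := rfl
          _ = ∑ x, ciVec K (s.inf f ∩ B) x := by rw [ciVec_mul]
          _ = ((s.inf f ∩ B).card : K) := ci_sum_vec _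
      rw [hsum]
      set g : Fin k → Finset (Fin n) := fun i => if i = i₀ then B else f i with hg'
      have hgmem : ∀ i, g i ∈ F i := by
        intro i
        by_cases hii : i = i₀
        · subst hii; simpa [hg'] using hB
        · simpa [hg', hii] using hf i
      have hinf : Finset.univ.inf g = s.inf f ∩ B := by
        rw [← Finset.insert_erase (Finset.mem_univ i₀), Finset.inf_insert, ← hs']
        have h1 : s.inf g = s.inf f :=
          Finset.inf_congr rfl (fun i hi => by
            have : i ≠ i₀ := Finset.ne_of_mem_erase hi
            simp [hg', this])
        have h2 : g i₀ = B := by simp [hg']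
        rw [h1, h2, Finset.inf_eq_inter, Finset.inter_comm]
      have hdvd : p ∣ (s.inf f ∩ B).card := by
        rw [← hinf]
        exact dvd_trans (Nat.minFac_dvd ℓ) (h g hgmem)
      exact (ZMod.natCast_eq_zero_iff _ p).mpr hdvd
    have horth : ∀ u ∈ (∏ i ∈ s, V i), ∀ v ∈ V i₀, ∑ x, u x * v x = 0 := by
      intro u hu v hv
      rw [hW] at hu
      exact ci_orth_span hgen u hu v hv
    have horthrank : Module.finrank K ↥(∏ i ∈ s, V i) + Module.finrank K (V i₀)
        ≤ Fintype.card (Fin n) := ci_finrank_orth _ _ horth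
    have hchain := ci_finrank_prod_chain V s hs
    have hsum : ∑ i ∈ s, Module.finrank K (V i) + Module.finrank K (V i₀)
        = ∑ i, Module.finrank K (V i) := by
      rw [hs']
      exact Finset.sum_erase_add _ _ (Finset.mem_univ i₀)
    have hNn : Fintype.card (Fin n) = n := Fintype.card_fin n
    have htotal : ∑ i, Module.finrank K (V i) ≤ (k - 1) * n := by
      rw [hNn] at horthrank hchain
      rw [hscard] at hchain
      omega
    calc ∏ i, (F i).card ≤ ∏ i, 2 ^ Module.finrank K (V i) :=
          Finset.prod_le_prod' (fun i _ => hcard i)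
      _ = 2 ^ ∑ i, Module.finrank K (V i) := by rw [Finset.prod_pow_eq_pow_sum]
      _ ≤ 2 ^ ((k - 1) * n) := Nat.pow_le_pow_right (by norm_num) htotal
  · push_neg at hne
    obtain ⟨i, hi⟩ := hne
    rw [Finset.prod_eq_zero (Finset.mem_univ i) (by simp [hi])]
    exact Nat.zero_le _
end

section
/- Let p be a prime and k \geq 2. Let V_1,...,V_k be subspaces of \mathbb{F}_p^n such that for all v_1 \in V_1, ..., v_k \in V_k, the sum of coordinates of the coordinate-wise product v_1 \cdot v_2 \cdots v_k is zero. Then dim(V_1) + ... + dim(V_k) \leq (k-1)n. -/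
open Finset

section Aux

variable {K : Type*} [Field K] {M N : Type*} [AddCommGroup M] [Module K M]
  [AddCommGroup N] [Module K N] [FiniteDimensional K M]

/-- If `f` is injective on `S`, mapping preserves finrank. -/
lemma aux_finrank_map_eq (f : M →ₗ[K] N) (S : Submodule K M)
    (hd : ∀ x ∈ S, f x = 0 → x = 0) :
    Module.finrank K (S.map f) = Module.finrank K S := by
  have h1 := LinearMap.finrank_range_add_finrank_ker (f.domRestrict S)
  rw [LinearMap.range_domRestrict] at h1
  have hker : LinearMap.ker (f.domRestrict S) = ⊥ := by
    rw [LinearMap.ker_eq_bot']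
    rintro ⟨x, hx⟩ hfx
    have : f x = 0 := by simpa using congrArg id hfx
    exact Subtype.ext (hd x hx this)
  rw [hker] at h1
  simpa using h1

/-- Cutting by the kernel of a functional loses at most one dimension. -/
lemma aux_finrank_le_inf_ker (ℓ : M →ₗ[K] K) (S : Submodule K M) :
    Module.finrank K S ≤ Module.finrank K ↥(S ⊓ LinearMap.ker ℓ) + 1 := by
  have h1 := LinearMap.finrank_range_add_finrank_ker (ℓ.domRestrict S)
  have h2 : Module.finrank K ↥(LinearMap.range (ℓ.domRestrict S)) ≤ 1 := by
    simpa using Submodule.finrank_le (LinearMap.range (ℓ.domRestrict S))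
  have h3 : Module.finrank K ↥(LinearMap.ker (ℓ.domRestrict S))
      = Module.finrank K ↥(S ⊓ LinearMap.ker ℓ) := by
    rw [LinearMap.ker_domRestrict, ← Submodule.finrank_map_subtype_eq,
      Submodule.map_comap_subtype]
  omega

end Aux

/-- If the coordinate-wise product of any `k` vectors `vᵢ ∈ Vᵢ` has zero coordinate sum,
then `∑ dim Vᵢ ≤ (k-1)n`. -/
theorem cross_subspaces {p k n : ℕ} (hp : p.Prime) [Fact p.Prime] (hk : 2 ≤ k)
    (V : Fin k → Submodule (ZMod p) (Fin n → ZMod p))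
    (h : ∀ v : (i : Fin k) → (Fin n → ZMod p), (∀ i, v i ∈ V i) →
      ∑ x, ∏ i, v i x = 0) :
    ∑ i, Module.finrank (ZMod p) (V i) ≤ (k - 1) * n := by
  induction n with
  | zero =>
    have hz : ∀ i, Module.finrank (ZMod p) (V i) = 0 := by
      intro i
      have h1 := Submodule.finrank_le (V i)
      have h2 : Module.finrank (ZMod p) (Fin 0 → ZMod p) = 0 := by simp
      omega
    simp [hz]
  | succ n ih =>
    -- the last basis vector
    set e : Fin (n + 1) → ZMod p := Pi.single (Fin.last n) 1 with he
    by_cases hE : ∀ i, e ∈ V i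
    · -- contradiction : the sum for v i = e is 1
      exfalso
      have h0 := h (fun _ => e) (fun i => hE i)
      have hval : ∀ x : Fin (n + 1),
          (∏ _i : Fin k, e x) = if x = Fin.last n then 1 else 0 := by
        intro x
        rcases eq_or_ne x (Fin.last n) with rfl | hx
        · simp [he, Pi.single_apply]
        · simp [he, Pi.single_apply, hx, zero_pow (by omega : k ≠ 0)]
      rw [Finset.sum_congr rfl (fun x _ => hval x)] at h0
      simp at h0
    · push_neg at hE
      obtain ⟨i₀, hi₀⟩ := hE
      set π : (Fin (n + 1) → ZMod p) →ₗ[ZMod p] (Fin n → ZMod p) :=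
        LinearMap.funLeft (ZMod p) (ZMod p) Fin.castSucc with hπ
      set ℓ : (Fin (n + 1) → ZMod p) →ₗ[ZMod p] ZMod p :=
        LinearMap.proj (Fin.last n) with hℓ
      have hπapp : ∀ (x : Fin (n + 1) → ZMod p) (j : Fin n), π x j = x j.castSucc := by
        intro x j; rw [hπ]; rfl
      -- elements of ker π are supported on the last coordinate
      have hproj : ∀ x : Fin (n + 1) → ZMod p, π x = 0 →
          x = Pi.single (Fin.last n) (x (Fin.last n)) := by
        intro x hx
        funext y
        rcases Fin.eq_castSucc_or_eq_last y with ⟨j, rfl⟩ | rfl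
        · have hj : x j.castSucc = 0 := by rw [← hπapp x j, hx]; rfl
          simp [hj, Pi.single_apply, (Fin.castSucc_lt_last j).ne]
        · simp [Pi.single_apply]
      set S : Fin k → Submodule (ZMod p) (Fin (n + 1) → ZMod p) :=
        fun i => if i = i₀ then V i else V i ⊓ LinearMap.ker ℓ with hS
      set W : Fin k → Submodule (ZMod p) (Fin n → ZMod p) :=
        fun i => (S i).map π with hW
      -- π is injective on each S i
      have hinj : ∀ i, ∀ x ∈ S i, π x = 0 → x = 0 := by
        intro i x hxS hπx
        have hx' := hproj x hπx
        by_cases hii : i = i₀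
        · subst hii
          rw [hS] at hxS; simp at hxS
          by_contra hne
          have hc : x (Fin.last n) ≠ 0 := by
            intro hc0
            exact hne (by rw [hx', hc0, Pi.single_zero])
          apply hi₀
          have hmem := (V i).smul_mem (x (Fin.last n))⁻¹ hxS
          have : (x (Fin.last n))⁻¹ • x = e := by
            rw [hx', ← Pi.single_smul]
            simp [he, smul_eq_mul, inv_mul_cancel₀ hc]
          rwa [this] at hmem
        · rw [hS] at hxS; simp [hii] at hxS
          have hlast : x (Fin.last n) = 0 := hxS.2
          rw [hx', hlast, Pi.single_zero]
      -- the hypothesis descends to the W i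
      have hWhyp : ∀ w : (i : Fin k) → (Fin n → ZMod p), (∀ i, w i ∈ W i) →
          ∑ x, ∏ i, w i x = 0 := by
        intro w hw
        choose v hvS hπv using hw
        have hvV : ∀ i, v i ∈ V i := by
          intro i
          have hm := hvS i
          by_cases hii : i = i₀
          · simpa [hS, hii] using hm
          · have : v i ∈ V i ⊓ LinearMap.ker ℓ := by simpa [hS, hii] using hm
            exact this.1
        have htot := h v hvV
        rw [Fin.sum_univ_castSucc] at htot
        haveI : Nontrivial (Fin k) := Fin.nontrivial_iff_two_le.mpr hk
        obtain ⟨j, hj⟩ := exists_ne i₀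
        have hjker : v j (Fin.last n) = 0 := by
          have hm := hvS j
          have hmem : v j ∈ V j ⊓ LinearMap.ker ℓ := by simpa [hS, hj] using hm
          exact hmem.2
        have hlast0 : (∏ i, v i (Fin.last n)) = 0 :=
          Finset.prod_eq_zero (Finset.mem_univ j) hjker
        rw [hlast0, add_zero] at htot
        have hsame : ∀ x : Fin n, (∏ i, w i x) = ∏ i, v i (x.castSucc) := by
          intro x
          refine Finset.prod_congr rfl fun i _ => ?_
          rw [← hπv i, hπapp]
        rw [Finset.sum_congr rfl (fun x _ => hsame x)]
        exact htot
      have hih := ih W hWhyp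
      -- dimension comparison
      have hdim : ∀ i, Module.finrank (ZMod p) (V i) ≤
          Module.finrank (ZMod p) (W i) + (if i = i₀ then 0 else 1) := by
        intro i
        have h1 : Module.finrank (ZMod p) (W i) = Module.finrank (ZMod p) (S i) := by
          exact aux_finrank_map_eq π (S i) (hinj i)
        by_cases hii : i = i₀
        · have hSi : S i = V i := by simp [hS, hii]
          rw [hSi] at h1
          simp [hii, h1]
        · have hSi : S i = V i ⊓ LinearMap.ker ℓ := by simp [hS, hii]
          have h2 : Module.finrank (ZMod p) (V i) ≤ Module.finrank (ZMod p) (S i) + 1 := by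
            rw [hSi]
            exact aux_finrank_le_inf_ker ℓ (V i)
          simp only [hii, if_false]
          omega
      have hsum : ∑ i, Module.finrank (ZMod p) (V i) ≤
          ∑ i, Module.finrank (ZMod p) (W i) + ∑ i : Fin k, (if i = i₀ then 0 else 1) := by
        rw [← Finset.sum_add_distrib]
        exact Finset.sum_le_sum fun i _ => hdim i
      have hcnt : (∑ i : Fin k, (if i = i₀ then 0 else 1)) = k - 1 := by
        have h1 : (∑ i : Fin k, if i = i₀ then (0 : ℕ) else 1)
            + ∑ i : Fin k, (if i = i₀ then (1 : ℕ) else 0) = k := by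
          rw [← Finset.sum_add_distrib]
          have hone : ∀ i : Fin k,
              ((if i = i₀ then (0:ℕ) else 1) + if i = i₀ then (1:ℕ) else 0) = 1 := by
            intro i; split <;> rfl
          simp [hone]
        have h2 : (∑ i : Fin k, if i = i₀ then (1 : ℕ) else 0) = 1 := by
          simp [Finset.sum_ite_eq']
        omega
      rw [hcnt] at hsum
      calc ∑ i, Module.finrank (ZMod p) (V i)
          ≤ ∑ i, Module.finrank (ZMod p) (W i) + (k - 1) := hsum
        _ ≤ (k - 1) * n + (k - 1) := by omega
        _ = (k - 1) * (n + 1) := by ring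
end

section
/- Let \ell be a positive integer and suppose the intersection of any (finite) number of sets in a family \mathcal{F} \subset 2^{[n]} has size divisible by \ell (equivalently, \mathcal{F} is n-closed over \mathbb{Z}_\ell). Then |\mathcal{F}| \leq 2^{\lfloor n/\ell \rfloor}. -/
open Finset

/-- Abstract bound: an intersection-closed family of subsets of a ground set `V`,
all of whose members have size divisible by `ℓ`, has at most `2 ^ (|V|/ℓ)` members. -/
lemma closed_family_bound {α : Type*} [DecidableEq α] {ℓ : ℕ} (hℓ : 1 ≤ ℓ) :
    ∀ k (V : Finset α) (L : Finset (Finset α)), V.card = k →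
      (∀ S ∈ L, S ⊆ V) → (∀ S ∈ L, ∀ T ∈ L, S ∩ T ∈ L) →
      (∀ S ∈ L, ℓ ∣ S.card) → L.card ≤ 2 ^ (k / ℓ) := by
  intro k
  induction k using Nat.strong_induction_on with
  | _ k IH =>
    intro V L hVk hsub hclosed hdiv
    by_cases hone : L.card ≤ 1
    · exact hone.trans Nat.one_le_two_pow
    push_neg at hone
    have hne : L.Nonempty := card_pos.mp (by omega)
    -- the minimum element M of L
    set M : Finset α := L.inf' hne id with hM
    have hMmem : M ∈ L := by
      have := Finset.inf'_mem (↑L : Set (Finset α)) (fun x hx y hy => hclosed x hx y hy)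
        L hne id (fun i hi => hi)
      exact this
    have hMle : ∀ S ∈ L, M ⊆ S := fun S hS => inf'_le id hS
    -- pick a minimal-cardinality element A of L \ {M}
    have herase : (L.erase M).Nonempty := by
      apply card_pos.mp
      rw [card_erase_of_mem hMmem]; omega
    obtain ⟨A, hAmem, hAmin⟩ := Finset.exists_min_image (L.erase M) Finset.card herase
    have hAL : A ∈ L := mem_of_mem_erase hAmem
    have hAne : A ≠ M := ne_of_mem_erase hAmem
    have hMA : M ⊆ A := hMle A hAL
    have hMAss : M ⊂ A := ssubset_of_ne_of_subset (Ne.symm hAne) hMA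
    have hcardMA : M.card < A.card := card_lt_card hMAss
    have hdivM : ℓ ∣ M.card := hdiv M hMmem
    have hdivA : ℓ ∣ A.card := hdiv A hAL
    have hAge : M.card + ℓ ≤ A.card := by
      obtain ⟨a, ha⟩ := hdivM; obtain ⟨b, hb⟩ := hdivA
      have hab : a < b := by
        have h' := hcardMA
        rw [ha, hb] at h'
        exact Nat.lt_of_mul_lt_mul_left h'
      have h2 : ℓ * (a + 1) ≤ ℓ * b := Nat.mul_le_mul_left ℓ hab
      rw [Nat.mul_add, Nat.mul_one] at h2
      omega
    have hℓA : ℓ ≤ A.card := by omega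
    have hℓk : ℓ ≤ k := hℓA.trans (hVk ▸ card_le_card (hsub A hAL))
    -- key: any S ∈ L not containing A satisfies S ∩ A = M
    have hkey : ∀ S ∈ L, ¬ A ⊆ S → S ∩ A = M := by
      intro S hS hAS
      have hSA : S ∩ A ∈ L := hclosed S hS A hAL
      by_contra hne'
      have hmem' : S ∩ A ∈ L.erase M := mem_erase.mpr ⟨hne', hSA⟩
      have h1 : A.card ≤ (S ∩ A).card := hAmin _ hmem'
      have h2 : S ∩ A ⊂ A := by
        refine ssubset_of_ne_of_subset ?_ inter_subset_right
        intro hEq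
        exact hAS (hEq ▸ inter_subset_left)
      exact absurd (card_lt_card h2) (by omega)
    -- split L
    have hsplit : (L.filter (fun S => A ⊆ S)).card
        + (L.filter (fun S => ¬ A ⊆ S)).card = L.card :=
      card_filter_add_card_filter_not _
    -- part 1: sets containing A, shifted by removing A
    set L₁ : Finset (Finset α) := (L.filter (fun S => A ⊆ S)).image (fun S => S \ A) with hL₁
    have hcard1 : (L.filter (fun S => A ⊆ S)).card = L₁.card := by
      rw [hL₁, card_image_of_injOn]
      intro S hS T hT hST
      simp only [mem_coe, mem_filter] at hS hT
      have hST' : S \ A = T \ A := hST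
      rw [← sdiff_union_of_subset hS.2, ← sdiff_union_of_subset hT.2, hST']
    have hb1 : L₁.card ≤ 2 ^ ((k - ℓ) / ℓ) := by
      have hlt : (V \ A).card < k := by
        rw [card_sdiff_of_subset (hsub A hAL), hVk]; omega
      have := IH (V \ A).card hlt (V \ A) L₁ rfl ?_ ?_ ?_
      · refine this.trans (Nat.pow_le_pow_right (by norm_num) (Nat.div_le_div_right ?_))
        rw [card_sdiff_of_subset (hsub A hAL), hVk]; omega
      · intro S hS
        simp only [hL₁, mem_image, mem_filter] at hS
        obtain ⟨T, ⟨hT, hAT⟩, rfl⟩ := hS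
        exact sdiff_subset_sdiff (hsub T hT) le_rfl
      · intro S hS T hT
        simp only [hL₁, mem_image, mem_filter] at hS hT ⊢
        obtain ⟨S', ⟨hS', hAS'⟩, rfl⟩ := hS
        obtain ⟨T', ⟨hT', hAT'⟩, rfl⟩ := hT
        exact ⟨S' ∩ T', ⟨hclosed S' hS' T' hT', subset_inter hAS' hAT'⟩,
          by ext x; simp only [mem_sdiff, mem_inter]; tauto⟩
      · intro S hS
        simp only [hL₁, mem_image, mem_filter] at hS
        obtain ⟨T, ⟨hT, hAT⟩, rfl⟩ := hS
        rw [card_sdiff_of_subset hAT]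
        exact Nat.dvd_sub (hdiv T hT) hdivA
    -- part 2: sets not containing A, which live inside V \ (A \ M)
    have hb2 : (L.filter (fun S => ¬ A ⊆ S)).card ≤ 2 ^ ((k - ℓ) / ℓ) := by
      have hAMV : A \ M ⊆ V := (sdiff_subset).trans (hsub A hAL)
      have hlt : (V \ (A \ M)).card < k := by
        rw [card_sdiff_of_subset hAMV, card_sdiff_of_subset hMA, hVk]; omega
      have := IH (V \ (A \ M)).card hlt (V \ (A \ M)) (L.filter (fun S => ¬ A ⊆ S)) rfl ?_ ?_ ?_
      · refine this.trans (Nat.pow_le_pow_right (by norm_num) (Nat.div_le_div_right ?_))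
        rw [card_sdiff_of_subset hAMV, card_sdiff_of_subset hMA, hVk]; omega
      · intro S hS
        rw [mem_filter] at hS
        obtain ⟨hSL, hAS⟩ := hS
        intro x hx
        rw [mem_sdiff]
        refine ⟨hsub S hSL hx, fun hxAM => ?_⟩
        rw [mem_sdiff] at hxAM
        have : x ∈ S ∩ A := mem_inter.mpr ⟨hx, hxAM.1⟩
        rw [hkey S hSL hAS] at this
        exact hxAM.2 this
      · intro S hS T hT
        rw [mem_filter] at hS hT ⊢
        refine ⟨hclosed S hS.1 T hT.1, fun hAST => hS.2 (hAST.trans inter_subset_left)⟩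
      · intro S hS
        exact hdiv S (mem_filter.mp hS).1
    have hpow : 2 ^ ((k - ℓ) / ℓ) + 2 ^ ((k - ℓ) / ℓ) ≤ 2 ^ (k / ℓ) := by
      have : (k - ℓ) / ℓ + 1 = k / ℓ := by
        rw [← Nat.add_div_right _ (by omega : 0 < ℓ), Nat.sub_add_cancel hℓk]
      rw [← this, pow_succ]
      omega
    omega

/-- If the intersection of any finite number of members of `F` has size divisible by `ℓ`,
then `|F| ≤ 2 ^ ⌊n/ℓ⌋`. -/
theorem fully_closed_bound {ℓ n : ℕ} (hℓ : 1 ≤ ℓ) (F : Finset (Finset (Fin n)))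
    (h : ∀ m : ℕ, 1 ≤ m → ∀ f : Fin m → Finset (Fin n), (∀ j, f j ∈ F) →
      ℓ ∣ (Finset.univ.inf f).card) :
    F.card ≤ 2 ^ (n / ℓ) := by
  classical
  -- the intersection closure of F
  set L : Finset (Finset (Fin n)) :=
    (F.powerset.filter (fun G => G.Nonempty)).image (fun G => G.inf id) with hL
  have hFL : F ⊆ L := by
    intro S hS
    rw [hL, mem_image]
    exact ⟨{S}, mem_filter.mpr ⟨mem_powerset.mpr (singleton_subset_iff.mpr hS),
      singleton_nonempty S⟩, inf_singleton⟩
  have hclosed : ∀ S ∈ L, ∀ T ∈ L, S ∩ T ∈ L := by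
    intro S hS T hT
    rw [hL, mem_image] at hS hT ⊢
    obtain ⟨G₁, hG₁, rfl⟩ := hS
    obtain ⟨G₂, hG₂, rfl⟩ := hT
    rw [mem_filter, mem_powerset] at hG₁ hG₂
    exact ⟨G₁ ∪ G₂, mem_filter.mpr ⟨mem_powerset.mpr (union_subset hG₁.1 hG₂.1),
      hG₁.2.mono subset_union_left⟩, by rw [inf_union]; rfl⟩
  have hdiv : ∀ S ∈ L, ℓ ∣ S.card := by
    intro S hS
    rw [hL, mem_image] at hS
    obtain ⟨G, hG, rfl⟩ := hS
    rw [mem_filter, mem_powerset] at hG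
    obtain ⟨hGF, hGne⟩ := hG
    set e : {x // x ∈ G} ≃ Fin G.card := G.equivFin with he
    have hm : 1 ≤ G.card := card_pos.mpr hGne
    have := h G.card hm (fun j => (e.symm j : Finset (Fin n)))
      (fun j => hGF (e.symm j).2)
    have heq : (Finset.univ.inf (fun j => (e.symm j : Finset (Fin n)))) = G.inf id := by
      rw [← Finset.univ_map_equiv_to_embedding e, inf_map]
      have h1 : Finset.univ.inf ((fun j => (e.symm j : Finset (Fin n))) ∘ ⇑e.toEmbedding)
          = Finset.univ.inf (fun x : {x // x ∈ G} => id (x : Finset (Fin n))) := by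
        refine Finset.inf_congr rfl fun x _ => ?_
        simp
      rw [h1]
      have h2 : (Finset.univ : Finset {x // x ∈ G}) = G.attach := rfl
      rw [h2, inf_attach]
    rwa [heq] at this
  calc F.card ≤ L.card := card_le_card hFL
    _ ≤ 2 ^ (n / ℓ) := closed_family_bound hℓ n Finset.univ L (by simp)
        (fun S _ => subset_univ S) hclosed hdiv
end
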